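/- arXiv:1508.03349 — 5 statements merged into one kernel-verified Lean document; each statement's English description precedes it below -/
import Mathlib

section
/- If the moment generating function M(t) = E[e^{tX}] of a random variable X is finite on a neighborhood (−t₀, t₀) of 0 and a > E[X], then inf_{t>0}(log M(t) − t·a) < 0. -/
open MeasureTheory Real

lemma exp_quad_bound (u : ℝ) : Real.exp u ≤ 1 + u + u ^ 2 * Real.exp |u| := by
  have hexp1 : (1 : ℝ) ≤ Real.exp |u| := by
    rw [Real.one_le_exp_iff]; exact abs_nonneg u
  rcases le_or_gt |u| 1 with h | h
  · have hb := Real.exp_bound h (n := 2) (by norm_num)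
    have hsum : ∑ m ∈ Finset.range 2, u ^ m / (m.factorial : ℝ) = 1 + u := by
      simp [Finset.sum_range_succ]
    rw [hsum] at hb
    have h1 := (abs_sub_le_iff.1 hb).1
    rw [sq_abs] at h1
    norm_num at h1
    have h2 : u ^ 2 * 1 ≤ u ^ 2 * Real.exp |u| :=
      mul_le_mul_of_nonneg_left hexp1 (sq_nonneg u)
    nlinarith [sq_nonneg u]
  · rcases le_or_gt 0 u with hu | hu
    · have hu1 : 1 < u := by rwa [abs_of_nonneg hu] at h
      have h2 : 1 * Real.exp u ≤ u ^ 2 * Real.exp u :=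
        mul_le_mul_of_nonneg_right (by nlinarith) (Real.exp_pos u).le
      rw [abs_of_nonneg hu]
      linarith
    · have hu1 : 1 < -u := by rwa [abs_of_neg hu] at h
      have h1 : Real.exp u ≤ 1 := Real.exp_le_one_iff.mpr hu.le
      have h2 := Real.add_one_le_exp (-u)
      rw [abs_of_neg hu]
      have h3 : (1:ℝ) * (1 - u) ≤ u ^ 2 * (1 - u) :=
        mul_le_mul_of_nonneg_right (by nlinarith) (by linarith)
      have h4 : u ^ 2 * (1 - u) ≤ u ^ 2 * Real.exp (-u) :=
        mul_le_mul_of_nonneg_left (by linarith) (sq_nonneg u)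
      linarith

lemma sq_le_four_exp {y : ℝ} (hy : 0 ≤ y) : y ^ 2 ≤ 4 * Real.exp y := by
  have h1 := Real.add_one_le_exp (y / 2)
  have h2 : Real.exp (y / 2) * Real.exp (y / 2) = Real.exp y := by
    rw [← Real.exp_add]; ring_nf
  nlinarith [Real.exp_pos (y / 2)]

/-- **Negativity of the Chernoff exponent.** If the moment generating function
`M(t) = E[e^{tX}]` is finite on a neighborhood `(−t₀, t₀)` of `0` and
`a > E[X]`, then `inf_{t>0}(log M(t) − t·a) < 0`; i.e. the infimum is attained
below zero: there is `t > 0` (with `M(t)` finite) such that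
`log M(t) − t·a < 0`. -/
theorem covering_stmt4
    {Ω : Type*} [MeasurableSpace Ω] (μ : Measure Ω) [IsProbabilityMeasure μ]
    (X : Ω → ℝ) (hmeas : Measurable X) (a : ℝ)
    (t₀ : ℝ) (ht₀ : 0 < t₀)
    (hmgf : ∀ t : ℝ, |t| < t₀ → Integrable (fun ω => exp (t * X ω)) μ)
    (hint : Integrable X μ)
    (ha : ∫ ω, X ω ∂μ < a) :
    ∃ t : ℝ, 0 < t ∧ Integrable (fun ω => exp (t * X ω)) μ ∧
      Real.log (∫ ω, exp (t * X ω) ∂μ) - t * a < 0 := by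
  set m := ∫ ω, X ω ∂μ with hm
  set s := t₀ / 2 with hs
  have hs1 : |s| < t₀ := by rw [abs_of_pos (by positivity)]; linarith
  have hs2 : |(-s)| < t₀ := by rw [abs_neg]; exact hs1
  set G : Ω → ℝ := fun ω => 64 / t₀ ^ 2 * (Real.exp (s * X ω) + Real.exp (-s * X ω))
    with hGdef
  have hGint : Integrable G μ := (((hmgf s hs1).add (hmgf (-s) hs2)).const_mul _)
  set C := ∫ ω, G ω ∂μ with hC
  have hC0 : 0 ≤ C := by
    apply integral_nonneg
    intro ω
    have := Real.exp_pos (s * X ω)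
    have := Real.exp_pos (-s * X ω)
    positivity
  set C' := max C 1 with hC'def
  have hC'1 : (1 : ℝ) ≤ C' := le_max_right _ _
  have hC'0 : 0 < C' := lt_of_lt_of_le one_pos hC'1
  have hCC' : C ≤ C' := le_max_left _ _
  have hampos : 0 < a - m := sub_pos.mpr ha
  set t := min (t₀ / 4) ((a - m) / (2 * C')) with ht
  have htpos : 0 < t := lt_min (by linarith) (div_pos hampos (by linarith))
  have ht4 : t ≤ t₀ / 4 := min_le_left _ _
  have htdiv : t ≤ (a - m) / (2 * C') := min_le_right _ _
  have htC : t * (2 * C') ≤ a - m := by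
    rwa [← le_div_iff₀ (by linarith : (0:ℝ) < 2 * C')]
  have htlt : |t| < t₀ := by rw [abs_of_pos htpos]; linarith
  have hintt := hmgf t htlt
  refine ⟨t, htpos, hintt, ?_⟩
  -- pointwise bound
  have hpt : ∀ ω, Real.exp (t * X ω) ≤ 1 + t * X ω + t ^ 2 * G ω := by
    intro ω
    have h1 := exp_quad_bound (t * X ω)
    have habs : |t * X ω| = t * |X ω| := by
      rw [abs_mul, abs_of_pos htpos]
    rw [habs] at h1
    -- exp (t |X|) ≤ exp ((t₀/4) |X|)
    have h2 : Real.exp (t * |X ω|) ≤ Real.exp (t₀ / 4 * |X ω|) :=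
      Real.exp_le_exp.mpr (by nlinarith [abs_nonneg (X ω)])
    -- X² ≤ (64/t₀²) exp ((t₀/4)|X|)
    have h3 : (t₀ / 4 * |X ω|) ^ 2 ≤ 4 * Real.exp (t₀ / 4 * |X ω|) :=
      sq_le_four_exp (by positivity)
    have h4 : X ω ^ 2 ≤ 64 / t₀ ^ 2 * Real.exp (t₀ / 4 * |X ω|) := by
      have hsq : (t₀ / 4 * |X ω|) ^ 2 = t₀ ^ 2 / 16 * X ω ^ 2 := by
        rw [mul_pow, sq_abs]; ring
      rw [hsq] at h3
      rw [div_mul_eq_mul_div, le_div_iff₀ (by positivity : (0:ℝ) < t₀ ^ 2)]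
      nlinarith
    -- exp ((t₀/2)|X|) ≤ exp (s X) + exp (-s X)
    have h5 : Real.exp (s * |X ω|) ≤ Real.exp (s * X ω) + Real.exp (-s * X ω) := by
      rcases abs_cases (X ω) with ⟨he, _⟩ | ⟨he, _⟩
      · rw [he]
        have := Real.exp_pos (-s * X ω); linarith
      · have heq : s * |X ω| = -s * X ω := by rw [he]; ring
        rw [heq]
        have := Real.exp_pos (s * X ω); linarith
    have h6 : Real.exp (t₀ / 4 * |X ω|) * Real.exp (t₀ / 4 * |X ω|)
        = Real.exp (s * |X ω|) := by
      rw [← Real.exp_add, hs]; ring_nf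
    have h7 : X ω ^ 2 * Real.exp (t * |X ω|) ≤ G ω := by
      have e1 : 0 < Real.exp (t₀ / 4 * |X ω|) := Real.exp_pos _
      have e2 : 0 < Real.exp (t * |X ω|) := Real.exp_pos _
      calc X ω ^ 2 * Real.exp (t * |X ω|)
          ≤ (64 / t₀ ^ 2 * Real.exp (t₀ / 4 * |X ω|)) * Real.exp (t₀ / 4 * |X ω|) := by
            apply mul_le_mul h4 h2 e2.le
            positivity
        _ = 64 / t₀ ^ 2 * Real.exp (s * |X ω|) := by rw [mul_assoc, h6]
        _ ≤ G ω := by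
            rw [hGdef]
            exact mul_le_mul_of_nonneg_left h5 (by positivity)
    calc Real.exp (t * X ω) ≤ 1 + t * X ω + (t * X ω) ^ 2 * Real.exp (t * |X ω|) := h1
      _ = 1 + t * X ω + t ^ 2 * (X ω ^ 2 * Real.exp (t * |X ω|)) := by ring
      _ ≤ 1 + t * X ω + t ^ 2 * G ω :=
          add_le_add_right (mul_le_mul_of_nonneg_left h7 (sq_nonneg t)) _
  have hA : Integrable (fun ω => 1 + t * X ω) μ := by
    exact (integrable_const 1).add (hint.const_mul t)
  have hB : Integrable (fun ω => t ^ 2 * G ω) μ := by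
    exact hGint.const_mul (t ^ 2)
  have hRHSint : Integrable (fun ω => 1 + t * X ω + t ^ 2 * G ω) μ := by
    exact hA.add hB
  have hMle : ∫ ω, Real.exp (t * X ω) ∂μ ≤ ∫ ω, (1 + t * X ω + t ^ 2 * G ω) ∂μ :=
    integral_mono hintt hRHSint hpt
  have hRHSval : ∫ ω, (1 + t * X ω + t ^ 2 * G ω) ∂μ = 1 + t * m + t ^ 2 * C := by
    rw [integral_add hA hB, integral_add (integrable_const 1) (hint.const_mul t),
      integral_const, integral_const_mul, integral_const_mul]
    simp [hm, hC]
  have hMpos : 0 < ∫ ω, Real.exp (t * X ω) ∂μ := by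
    have := ProbabilityTheory.mgf_pos (μ := μ) (X := X) (t := t) hintt
    simpa [ProbabilityTheory.mgf] using this
  have hlog : Real.log (∫ ω, Real.exp (t * X ω) ∂μ) ≤ (∫ ω, Real.exp (t * X ω) ∂μ) - 1 :=
    Real.log_le_sub_one_of_pos hMpos
  have hkey : Real.log (∫ ω, Real.exp (t * X ω) ∂μ) ≤ t * m + t ^ 2 * C := by
    rw [hRHSval] at hMle
    linarith
  have htsq : t ^ 2 * C ≤ t * (a - m) / 2 := by
    have h1 : t ^ 2 * C ≤ t ^ 2 * C' := mul_le_mul_of_nonneg_left hCC' (sq_nonneg t)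
    have h2 : t * C' ≤ (a - m) / 2 := by linarith
    have h3 : t * (t * C') ≤ t * ((a - m) / 2) := mul_le_mul_of_nonneg_left h2 htpos.le
    nlinarith
  have hfin : t * m + t ^ 2 * C - t * a < 0 := by nlinarith [mul_pos htpos hampos]
  linarith
end

section
/- If X₁, …, Xₙ are i.i.d. copies of X with MGF finite near 0 and a > E[X], then there exists I > 0 such that P(∑_{i=1}^n Xᵢ ≥ n·a) ≤ e^{−nI} for all n; in particular P((1/n)∑ Xᵢ ≥ a) → 0 exponentially fast. -/
open MeasureTheory Real ProbabilityTheory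

/-- **Exponential decay of the upper tail of i.i.d. averages.** If `X₀, X₁, …`
are i.i.d. with moment generating function finite near `0` and `a > E[X]`,
then there is `I > 0` with `P(∑_{i<n} Xᵢ ≥ n·a) ≤ e^{−nI}` for all `n`;
in particular `P((1/n)∑ Xᵢ ≥ a) → 0` exponentially fast. -/
theorem covering_stmt6
    {Ω : Type*} [MeasurableSpace Ω] (μ : Measure Ω) [IsProbabilityMeasure μ]
    (X : ℕ → Ω → ℝ)
    (hmeas : ∀ i, Measurable (X i))
    (hindep : iIndepFun X μ)
    (hident : ∀ i, IdentDistrib (X i) (X 0) μ μ)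
    (t₀ : ℝ) (ht₀ : 0 < t₀)
    (hmgf : ∀ t : ℝ, |t| < t₀ → Integrable (fun ω => exp (t * X 0 ω)) μ)
    (hint : Integrable (X 0) μ)
    (a : ℝ) (ha : ∫ ω, X 0 ω ∂μ < a) :
    ∃ I : ℝ, 0 < I ∧ ∀ n : ℕ,
      (μ {ω | (n : ℝ) * a ≤ ∑ i ∈ Finset.range n, X i ω}).toReal ≤
        exp (-(n : ℝ) * I) := by
  classical
  set ε : ℝ := t₀ / 3 with hε
  have hεpos : 0 < ε := by positivity
  -- derivative of the mgf at 0 is E[X]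
  have hderiv : HasDerivAt (fun t : ℝ => mgf (X 0) μ t) (∫ ω, X 0 ω ∂μ) 0 := by
    have h2ε : |2 * ε| < t₀ := by rw [abs_of_pos (by positivity)]; rw [hε]; linarith
    have h2ε' : |(-(2 * ε))| < t₀ := by rwa [abs_neg]
    have hbound_int : Integrable
        (fun ω => ε⁻¹ * (exp ((2 * ε) * X 0 ω) + exp ((-(2 * ε)) * X 0 ω))) μ :=
      ((hmgf _ h2ε).add (hmgf _ h2ε')).const_mul _
    have key := hasDerivAt_integral_of_dominated_loc_of_deriv_le (𝕜 := ℝ)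
      (F := fun t ω => exp (t * X 0 ω))
      (F' := fun t ω => X 0 ω * exp (t * X 0 ω))
      (x₀ := 0)
      (bound := fun ω => ε⁻¹ * (exp ((2 * ε) * X 0 ω) + exp ((-(2 * ε)) * X 0 ω)))
      (Metric.ball_mem_nhds (0 : ℝ) hεpos)
      (Filter.Eventually.of_forall fun t =>
        (((hmeas 0).const_mul t).exp).aestronglyMeasurable)
      (by simpa using hmgf 0 (by simpa using ht₀))
      (((hmeas 0).mul ((hmeas 0).const_mul (0 : ℝ)).exp).aestronglyMeasurable)
      ?_ hbound_int ?_
    · have h0 : (∫ ω, X 0 ω * exp ((0 : ℝ) * X 0 ω) ∂μ) = ∫ ω, X 0 ω ∂μ := by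
        simp
      simpa [mgf, h0] using key.2
    · refine Filter.Eventually.of_forall fun ω t ht => ?_
      have htε : |t| < ε := by simpa [Real.dist_eq] using Metric.mem_ball.mp ht
      have h1 : ‖X 0 ω * exp (t * X 0 ω)‖ = |X 0 ω| * exp (t * X 0 ω) := by
        rw [norm_mul, Real.norm_eq_abs, Real.norm_eq_abs, abs_exp]
      rw [h1]
      have h2 : exp (t * X 0 ω) ≤ exp (ε * |X 0 ω|) := by
        apply exp_le_exp.mpr
        calc t * X 0 ω ≤ |t * X 0 ω| := le_abs_self _
          _ = |t| * |X 0 ω| := abs_mul _ _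
          _ ≤ ε * |X 0 ω| := by
              apply mul_le_mul_of_nonneg_right htε.le (abs_nonneg _)
      have h3 : |X 0 ω| ≤ ε⁻¹ * exp (ε * |X 0 ω|) := by
        have h4 : ε * |X 0 ω| ≤ exp (ε * |X 0 ω|) := by
          nlinarith [abs_nonneg (X 0 ω), Real.add_one_le_exp (ε * |X 0 ω|)]
        rw [inv_mul_eq_div]
        exact (le_div_iff₀' hεpos).mpr h4
      have h5 : exp (ε * |X 0 ω|) * exp (ε * |X 0 ω|) = exp (2 * ε * |X 0 ω|) := by
        rw [← exp_add]; ring_nf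
      have h6 : exp (2 * ε * |X 0 ω|) ≤
          exp ((2 * ε) * X 0 ω) + exp ((-(2 * ε)) * X 0 ω) := by
        rcases abs_cases (X 0 ω) with ⟨h, _⟩ | ⟨h, _⟩
        · rw [h]; nlinarith [exp_pos ((-(2 * ε)) * X 0 ω)]
        · rw [h]
          have : 2 * ε * -X 0 ω = (-(2 * ε)) * X 0 ω := by ring
          rw [this]; nlinarith [exp_pos ((2 * ε) * X 0 ω)]
      calc |X 0 ω| * exp (t * X 0 ω)
          ≤ (ε⁻¹ * exp (ε * |X 0 ω|)) * exp (ε * |X 0 ω|) := by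
            apply mul_le_mul h3 h2 (exp_pos _).le (by positivity)
        _ = ε⁻¹ * exp (2 * ε * |X 0 ω|) := by rw [mul_assoc, h5]
        _ ≤ ε⁻¹ * (exp ((2 * ε) * X 0 ω) + exp ((-(2 * ε)) * X 0 ω)) := by
            exact mul_le_mul_of_nonneg_left h6 (by positivity)
    · refine Filter.Eventually.of_forall fun ω t _ => ?_
      have : HasDerivAt (fun s : ℝ => s * X 0 ω) (X 0 ω) t := by
        simpa using (hasDerivAt_id t).mul_const (X 0 ω)
      simpa [mul_comm] using this.exp
  -- find t with 0 < t < ε and mgf t < exp (t * a)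
  obtain ⟨t, htpos, htlt, hmgflt⟩ :
      ∃ t : ℝ, 0 < t ∧ t < ε ∧ mgf (X 0) μ t < exp (t * a) := by
    set g : ℝ → ℝ := fun t => mgf (X 0) μ t - exp (t * a) with hg
    have hg0 : g 0 = 0 := by simp [hg, mgf_zero']
    have hgd : HasDerivAt g ((∫ ω, X 0 ω ∂μ) - a) 0 := by
      have ha' : HasDerivAt (fun t : ℝ => exp (t * a)) a 0 := by
        have : HasDerivAt (fun s : ℝ => s * a) a 0 := by
          simpa using (hasDerivAt_id (0 : ℝ)).mul_const a
        simpa using this.exp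
      exact hderiv.sub ha'
    have hslope := hasDerivAt_iff_tendsto_slope.mp hgd
    have hneg : (∫ ω, X 0 ω ∂μ) - a < 0 := by linarith
    have hev : ∀ᶠ u in nhdsWithin 0 {(0:ℝ)}ᶜ, slope g 0 u < 0 :=
      hslope.eventually (eventually_lt_nhds hneg)
    have hev2 : ∀ᶠ u in nhdsWithin 0 (Set.Ioi 0), slope g 0 u < 0 :=
      hev.filter_mono (nhdsWithin_mono 0 (fun u hu => by
        simp only [Set.mem_compl_iff, Set.mem_singleton_iff]
        exact ne_of_gt hu))
    have hev3 : ∀ᶠ u in nhdsWithin 0 (Set.Ioi 0), u < ε :=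
      eventually_nhdsWithin_of_eventually_nhds (eventually_lt_nhds hεpos)
    have hev4 : ∀ᶠ u in nhdsWithin 0 (Set.Ioi 0), u ∈ Set.Ioi (0:ℝ) :=
      eventually_mem_nhdsWithin
    obtain ⟨u, ⟨hs, hlt⟩, hmem⟩ := ((hev2.and hev3).and hev4).exists
    have hu3 : (0:ℝ) < u := hmem
    refine ⟨u, hu3, hlt, ?_⟩
    have : slope g 0 u = g u / u := by
      rw [slope_def_field, hg0, sub_zero, sub_zero]
    rw [this] at hs
    have hgu : g u < 0 := by
      by_contra h
      push_neg at h
      exact absurd (div_nonneg h (le_of_lt hu3)) (not_le.mpr hs)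
    simpa [hg, sub_neg] using hgu
  have htlt₀ : |t| < t₀ := by
    rw [abs_of_pos htpos]; rw [hε] at htlt; linarith
  have hint_t : Integrable (fun ω => exp (t * X 0 ω)) μ := hmgf t htlt₀
  have hmgfpos : 0 < mgf (X 0) μ t := mgf_pos hint_t
  refine ⟨t * a - Real.log (mgf (X 0) μ t), ?_, ?_⟩
  · have := Real.log_lt_log hmgfpos hmgflt
    rw [Real.log_exp] at this
    linarith
  · intro n
    set I := t * a - Real.log (mgf (X 0) μ t) with hI
    -- integrability of exp (t * X i)
    have hid : ∀ i : ℕ, Integrable (fun ω => exp (t * X i ω)) μ := by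
      intro i
      have := ((hident i).comp (measurable_exp.comp (measurable_const_mul t))).integrable_iff
      exact this.mpr hint_t
    have hmgf_eq : ∀ i : ℕ, mgf (X i) μ t = mgf (X 0) μ t := by
      intro i
      exact ((hident i).comp (measurable_exp.comp (measurable_const_mul t))).integral_eq
    have hsum_int : Integrable (fun ω => exp (t * (∑ i ∈ Finset.range n, X i) ω)) μ :=
      hindep.integrable_exp_mul_sum hmeas (fun i _ => hid i)
    have hcb := measure_ge_le_exp_mul_mgf (X := ∑ i ∈ Finset.range n, X i)
      ((n : ℝ) * a) htpos.le hsum_int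
    have hset : {ω | (n : ℝ) * a ≤ ∑ i ∈ Finset.range n, X i ω} =
        {ω | (n : ℝ) * a ≤ (∑ i ∈ Finset.range n, X i) ω} := by
      ext ω; simp [Finset.sum_apply]
    rw [hset]
    refine hcb.trans ?_
    rw [hindep.mgf_sum hmeas]
    have hprod : ∏ i ∈ Finset.range n, mgf (X i) μ t = (mgf (X 0) μ t) ^ n := by
      rw [Finset.prod_congr rfl fun i _ => hmgf_eq i, Finset.prod_const,
        Finset.card_range]
    rw [hprod]
    have hm : mgf (X 0) μ t = exp (Real.log (mgf (X 0) μ t)) := (Real.exp_log hmgfpos).symm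
    rw [hm, ← Real.exp_nat_mul, ← Real.exp_add]
    apply le_of_eq
    congr 1
    rw [hI]
    ring
end

section
/- Union-bound lower bound for covering: Let (U₀, U_{k+1}) and independent codewords U_j(m_j), m_j ∈ [M_j], j ∈ [k], be random variables such that for each m = (m₁,…,m_k), the tuple (U₀, U₁(m₁),…,U_k(m_k), U_{k+1}) has law p(u₀)∏_{j=1}^{k+1} p(u_j|u₀). Let F be any event (subset of the product space), and for a nonempty S ⊆ [k] let F_S be its projection onto the (u₀, u_S, u_{k+1}) coordinates. If α_S is a constant with α_S ≤ log( p(u_S|u₀,u_{k+1}) / ∏_{j∈S} p(u_j|u₀) ) for all (u₀,u_S,u_{k+1}) ∈ F_S, then P(∃ m : (U₀, U₁(m₁),…,U_k(m_k), U_{k+1}) ∈ F) ≤ (∏_{j∈S} M_j) · e^{−α_S}. Consequently P(∀ m : tuple ∉ F) ≥ 1 − min_S (∏_{j∈S} M_j) e^{−α_S}. -/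
open Finset Real

/-- Marginal of the joint pmf `p` on `U₀ × U_{[k]} × U_{k+1}` onto the
coordinates `(u₀, (u_j)_{j∈S}, u_{k+1})`, evaluated at a full tuple `z`
(only the `u₀`, `S`, and `u_{k+1}` coordinates of `z` matter). -/
def cvMargS {k : ℕ} {Ω₀ B : Type*} {A : Fin k → Type*}
    [Fintype Ω₀] [Fintype B] [∀ j, Fintype (A j)]
    [DecidableEq Ω₀] [DecidableEq B] [∀ j, DecidableEq (A j)]
    (p : Ω₀ × (∀ j, A j) × B → ℝ) (S : Finset (Fin k))
    (z : Ω₀ × (∀ j, A j) × B) : ℝ :=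
  ∑ w ∈ Finset.univ.filter (fun w : Ω₀ × (∀ j, A j) × B =>
    w.1 = z.1 ∧ (∀ j ∈ S, w.2.1 j = z.2.1 j) ∧ w.2.2 = z.2.2), p w

/-- Projection `F_S` of `F` onto the `(u₀, u_S, u_{k+1})` coordinates:
`z ∈ F_S` iff some tuple agreeing with `z` on `u₀`, the `S`-coordinates and
`u_{k+1}` lies in `F`. -/
def cvProjS {k : ℕ} {Ω₀ B : Type*} {A : Fin k → Type*}
    (F : Set (Ω₀ × (∀ j, A j) × B)) (S : Finset (Fin k)) :
    Set (Ω₀ × (∀ j, A j) × B) :=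
  {z | ∃ y : ∀ j, A j, (∀ j ∈ S, y j = z.2.1 j) ∧ (z.1, y, z.2.2) ∈ F}

section cvAux

set_option linter.unusedSectionVars false

variable {k : ℕ} {Ω₀ B : Type*} {A : Fin k → Type*}
    [Fintype Ω₀] [Fintype B] [∀ j, Fintype (A j)]
    [DecidableEq Ω₀] [DecidableEq B] [∀ j, DecidableEq (A j)]

open scoped Classical

/-- Sum over tuples agreeing with `w` on `(u₀, S, b)` of a product over `Sᶜ`
factorizes as a product of sums. -/
lemma cv_fiber_sum (S : Finset (Fin k)) (g : ∀ j : Fin k, A j → ℝ)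
    (w : Ω₀ × (∀ j, A j) × B) :
    ∑ z ∈ Finset.univ.filter (fun z : Ω₀ × (∀ j, A j) × B =>
        w.1 = z.1 ∧ (∀ j ∈ S, w.2.1 j = z.2.1 j) ∧ w.2.2 = z.2.2),
      ∏ j ∈ Sᶜ, g j (z.2.1 j)
    = ∏ j ∈ Sᶜ, ∑ a, g j a := by
  have h1 : ∑ z ∈ Finset.univ.filter (fun z : Ω₀ × (∀ j, A j) × B =>
        w.1 = z.1 ∧ (∀ j ∈ S, w.2.1 j = z.2.1 j) ∧ w.2.2 = z.2.2),
      ∏ j ∈ Sᶜ, g j (z.2.1 j)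
      = ∑ u ∈ Finset.univ.filter (fun u : ∀ j, A j => ∀ j ∈ S, w.2.1 j = u j),
          ∏ j ∈ Sᶜ, g j (u j) := by
    refine Finset.sum_nbij' (fun z => z.2.1) (fun u => (w.1, u, w.2.2)) ?_ ?_ ?_ ?_ ?_
    · intro z hz
      simp only [mem_filter, mem_univ, true_and] at hz ⊢
      exact hz.2.1
    · intro u hu
      simp only [mem_filter, mem_univ, true_and] at hu ⊢
      exact ⟨hu, trivial⟩
    · intro z hz
      simp only [mem_filter, mem_univ, true_and] at hz
      obtain ⟨h1, h2, h3⟩ := hz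
      show (w.1, z.2.1, w.2.2) = z
      rw [h1, h3]
    · intro u hu; rfl
    · intro z hz; rfl
  rw [h1, Finset.sum_filter]
  have h2 : ∀ u : ∀ j, A j,
      (if ∀ j ∈ S, w.2.1 j = u j then ∏ j ∈ Sᶜ, g j (u j) else 0)
      = ∏ j, (if j ∈ S then (if u j = w.2.1 j then (1:ℝ) else 0) else g j (u j)) := by
    intro u
    by_cases h : ∀ j ∈ S, w.2.1 j = u j
    · rw [if_pos h, ← Finset.prod_mul_prod_compl S
        (fun j => if j ∈ S then (if u j = w.2.1 j then (1:ℝ) else 0) else g j (u j))]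
      have e1 : ∏ j ∈ S, (if j ∈ S then (if u j = w.2.1 j then (1:ℝ) else 0) else g j (u j)) = 1 := by
        apply Finset.prod_eq_one
        intro j hj
        rw [if_pos hj, if_pos ((h j hj).symm)]
      have e2 : ∏ j ∈ Sᶜ, (if j ∈ S then (if u j = w.2.1 j then (1:ℝ) else 0) else g j (u j))
          = ∏ j ∈ Sᶜ, g j (u j) := by
        apply Finset.prod_congr rfl
        intro j hj
        rw [if_neg (Finset.mem_compl.mp hj)]
      rw [e1, e2, one_mul]
    · rw [if_neg h]
      push_neg at h
      obtain ⟨j, hjS, hj⟩ := h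
      refine (Finset.prod_eq_zero (Finset.mem_univ j) ?_).symm
      rw [if_pos hjS, if_neg (fun hc => hj hc.symm)]
  calc ∑ u : ∀ j, A j, (if ∀ j ∈ S, w.2.1 j = u j then ∏ j ∈ Sᶜ, g j (u j) else 0)
      = ∑ u : ∀ j, A j, ∏ j, (if j ∈ S then (if u j = w.2.1 j then (1:ℝ) else 0) else g j (u j)) :=
        Finset.sum_congr rfl fun u _ => h2 u
    _ = ∏ j, ∑ a, (if j ∈ S then (if a = w.2.1 j then (1:ℝ) else 0) else g j a) := by
        rw [Finset.prod_univ_sum]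
        rw [Fintype.piFinset_univ]
    _ = ∏ j ∈ Sᶜ, ∑ a, g j a := by
        rw [← Finset.prod_mul_prod_compl S]
        have e1 : ∏ j ∈ S, ∑ a, (if j ∈ S then (if a = w.2.1 j then (1:ℝ) else 0) else g j a) = 1 := by
          apply Finset.prod_eq_one
          intro j hj
          simp [if_pos hj]
        have e2 : ∏ j ∈ Sᶜ, ∑ a, (if j ∈ S then (if a = w.2.1 j then (1:ℝ) else 0) else g j a)
            = ∏ j ∈ Sᶜ, ∑ a, g j a := by
          apply Finset.prod_congr rfl
          intro j hj
          simp [if_neg (Finset.mem_compl.mp hj)]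
        rw [e1, e2, one_mul]

lemma cv_qj_sum (p : Ω₀ × (∀ j, A j) × B → ℝ)
    (q0 : Ω₀ → ℝ) (qj : ∀ j : Fin k, Ω₀ → A j → ℝ)
    (hq0 : ∀ u₀, q0 u₀ =
      ∑ z ∈ Finset.univ.filter (fun z : Ω₀ × (∀ j, A j) × B => z.1 = u₀), p z)
    (hqj : ∀ (j : Fin k) u₀ a, 0 ≤ qj j u₀ a ∧ q0 u₀ * qj j u₀ a =
      ∑ z ∈ Finset.univ.filter
        (fun z : Ω₀ × (∀ j, A j) × B => z.1 = u₀ ∧ z.2.1 j = a), p z)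
    (j : Fin k) (u₀ : Ω₀) (h : q0 u₀ ≠ 0) : ∑ a, qj j u₀ a = 1 := by
  have key : q0 u₀ * ∑ a, qj j u₀ a = q0 u₀ := by
    rw [Finset.mul_sum]
    calc ∑ a, q0 u₀ * qj j u₀ a
        = ∑ a, ∑ z ∈ Finset.univ.filter
            (fun z : Ω₀ × (∀ j, A j) × B => z.1 = u₀ ∧ z.2.1 j = a), p z :=
          Finset.sum_congr rfl fun a _ => (hqj j u₀ a).2
      _ = ∑ a, ∑ z ∈ (Finset.univ.filter
            (fun z : Ω₀ × (∀ j, A j) × B => z.1 = u₀)).filter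
            (fun z => z.2.1 j = a), p z := by
          apply Finset.sum_congr rfl
          intro a _
          rw [Finset.filter_filter]
      _ = ∑ z ∈ Finset.univ.filter
            (fun z : Ω₀ × (∀ j, A j) × B => z.1 = u₀), p z :=
          Finset.sum_fiberwise_of_maps_to (fun z _ => Finset.mem_univ (z.2.1 j)) p
      _ = q0 u₀ := (hq0 u₀).symm
  exact mul_left_cancel₀ h (key.trans (mul_one (q0 u₀)).symm)

lemma cv_W (p : Ω₀ × (∀ j, A j) × B → ℝ)
    (hp0 : ∀ z, 0 ≤ p z) (hp1 : ∑ z, p z = 1)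
    (q0 : Ω₀ → ℝ) (qj : ∀ j : Fin k, Ω₀ → A j → ℝ)
    (hq0 : ∀ u₀, q0 u₀ =
      ∑ z ∈ Finset.univ.filter (fun z : Ω₀ × (∀ j, A j) × B => z.1 = u₀), p z)
    (hqj : ∀ (j : Fin k) u₀ a, 0 ≤ qj j u₀ a ∧ q0 u₀ * qj j u₀ a =
      ∑ z ∈ Finset.univ.filter
        (fun z : Ω₀ × (∀ j, A j) × B => z.1 = u₀ ∧ z.2.1 j = a), p z)
    (S : Finset (Fin k)) :
    ∑ z : Ω₀ × (∀ j, A j) × B, cvMargS p S z * ∏ j ∈ Sᶜ, qj j z.1 (z.2.1 j) ≤ 1 := by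
  have step1 : ∀ z : Ω₀ × (∀ j, A j) × B,
      cvMargS p S z * ∏ j ∈ Sᶜ, qj j z.1 (z.2.1 j)
      = ∑ w : Ω₀ × (∀ j, A j) × B,
          (if w.1 = z.1 ∧ (∀ j ∈ S, w.2.1 j = z.2.1 j) ∧ w.2.2 = z.2.2 then
            p w * ∏ j ∈ Sᶜ, qj j w.1 (z.2.1 j) else 0) := by
    intro z
    rw [cvMargS, Finset.sum_mul, Finset.sum_filter]
    apply Finset.sum_congr rfl
    intro w _
    by_cases h : w.1 = z.1 ∧ (∀ j ∈ S, w.2.1 j = z.2.1 j) ∧ w.2.2 = z.2.2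
    · rw [if_pos h, if_pos h, h.1]
    · rw [if_neg h, if_neg h]
  calc ∑ z : Ω₀ × (∀ j, A j) × B, cvMargS p S z * ∏ j ∈ Sᶜ, qj j z.1 (z.2.1 j)
      = ∑ z : Ω₀ × (∀ j, A j) × B, ∑ w : Ω₀ × (∀ j, A j) × B,
          (if w.1 = z.1 ∧ (∀ j ∈ S, w.2.1 j = z.2.1 j) ∧ w.2.2 = z.2.2 then
            p w * ∏ j ∈ Sᶜ, qj j w.1 (z.2.1 j) else 0) :=
        Finset.sum_congr rfl fun z _ => step1 z
    _ = ∑ w : Ω₀ × (∀ j, A j) × B, ∑ z : Ω₀ × (∀ j, A j) × B,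
          (if w.1 = z.1 ∧ (∀ j ∈ S, w.2.1 j = z.2.1 j) ∧ w.2.2 = z.2.2 then
            p w * ∏ j ∈ Sᶜ, qj j w.1 (z.2.1 j) else 0) := Finset.sum_comm
    _ = ∑ w : Ω₀ × (∀ j, A j) × B, p w *
          ∑ z ∈ Finset.univ.filter (fun z : Ω₀ × (∀ j, A j) × B =>
            w.1 = z.1 ∧ (∀ j ∈ S, w.2.1 j = z.2.1 j) ∧ w.2.2 = z.2.2),
            ∏ j ∈ Sᶜ, qj j w.1 (z.2.1 j) := by
        apply Finset.sum_congr rfl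
        intro w _
        rw [Finset.mul_sum, Finset.sum_filter]
    _ = ∑ w : Ω₀ × (∀ j, A j) × B, p w * ∏ j ∈ Sᶜ, ∑ a, qj j w.1 a := by
        apply Finset.sum_congr rfl
        intro w _
        rw [cv_fiber_sum S (fun j => qj j w.1) w]
    _ ≤ ∑ w : Ω₀ × (∀ j, A j) × B, p w := by
        apply Finset.sum_le_sum
        intro w _
        rcases eq_or_lt_of_le (hp0 w) with h | h
        · rw [← h, zero_mul]
        · have hq0w : q0 w.1 ≠ 0 := by
            have : p w ≤ q0 w.1 := by
              rw [hq0]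
              exact Finset.single_le_sum (fun z _ => hp0 z)
                (Finset.mem_filter.mpr ⟨Finset.mem_univ w, rfl⟩)
            exact ne_of_gt (lt_of_lt_of_le h this)
          have : ∏ j ∈ Sᶜ, ∑ a, qj j w.1 a = 1 :=
            Finset.prod_eq_one fun j _ => cv_qj_sum p q0 qj hq0 hqj j w.1 hq0w
          rw [this, mul_one]
    _ = 1 := hp1

end cvAux

open scoped Classical in
/-- **Union-bound lower bound for covering (converse/packing bound).**
If each tuple `(U₀, U₁(m₁), …, U_k(m_k), U_{k+1})` has law
`p(u₀)·∏_j p(u_j|u₀)·p(u_{k+1}|u₀)` (the `q`'s being conditional marginals of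
the joint pmf `p`), and `α S` satisfies the change-of-measure bound
`α S ≤ log(p(u_S|u₀,u_{k+1})/∏_{j∈S} p(u_j|u₀))` on the projection `F_S`
(stated multiplicatively), then for every nonempty `S ⊆ [k]`,
`P(∃ m : tuple ∈ F) ≤ (∏_{j∈S} M_j)·e^{−α_S}` and consequently
`P(∀ m : tuple ∉ F) ≥ 1 − (∏_{j∈S} M_j)·e^{−α_S}`. -/
theorem covering_stmt9
    {k : ℕ} {Ω₀ B : Type*} {A : Fin k → Type*}
    [Fintype Ω₀] [Fintype B] [∀ j, Fintype (A j)]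
    [DecidableEq Ω₀] [DecidableEq B] [∀ j, DecidableEq (A j)]
    (p : Ω₀ × (∀ j, A j) × B → ℝ)
    (hp0 : ∀ z, 0 ≤ p z) (hp1 : ∑ z, p z = 1)
    (q0 : Ω₀ → ℝ) (qj : ∀ j : Fin k, Ω₀ → A j → ℝ) (qB : Ω₀ → B → ℝ)
    (hq0 : ∀ u₀, q0 u₀ =
      ∑ z ∈ Finset.univ.filter (fun z : Ω₀ × (∀ j, A j) × B => z.1 = u₀), p z)
    (hqj : ∀ (j : Fin k) u₀ a, 0 ≤ qj j u₀ a ∧ q0 u₀ * qj j u₀ a =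
      ∑ z ∈ Finset.univ.filter
        (fun z : Ω₀ × (∀ j, A j) × B => z.1 = u₀ ∧ z.2.1 j = a), p z)
    (hqB : ∀ u₀ b, 0 ≤ qB u₀ b ∧ q0 u₀ * qB u₀ b =
      ∑ z ∈ Finset.univ.filter
        (fun z : Ω₀ × (∀ j, A j) × B => z.1 = u₀ ∧ z.2.2 = b), p z)
    (M : Fin k → ℕ)
    (μ : Ω₀ × (∀ j, Fin (M j) → A j) × B → ℝ)
    (hμ0 : ∀ ω, 0 ≤ μ ω) (hμ1 : ∑ ω, μ ω = 1)
    (hlaw : ∀ (m : ∀ j, Fin (M j)) (z : Ω₀ × (∀ j, A j) × B),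
      ∑ ω ∈ Finset.univ.filter (fun ω : Ω₀ × (∀ j, Fin (M j) → A j) × B =>
          ω.1 = z.1 ∧ (∀ j, ω.2.1 j (m j) = z.2.1 j) ∧ ω.2.2 = z.2.2), μ ω
        = q0 z.1 * (∏ j, qj j z.1 (z.2.1 j)) * qB z.1 z.2.2)
    (F : Set (Ω₀ × (∀ j, A j) × B))
    (α : Finset (Fin k) → ℝ)
    (hα : ∀ S : Finset (Fin k), S.Nonempty → ∀ z ∈ cvProjS F S,
      Real.exp (α S) * (cvMargS p ∅ z * ∏ j ∈ S, qj j z.1 (z.2.1 j))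
        ≤ cvMargS p S z) :
    (∀ S : Finset (Fin k), S.Nonempty →
      ∑ ω ∈ Finset.univ.filter (fun ω : Ω₀ × (∀ j, Fin (M j) → A j) × B =>
          ∃ m : ∀ j, Fin (M j), (ω.1, fun j => ω.2.1 j (m j), ω.2.2) ∈ F), μ ω
        ≤ (∏ j ∈ S, (M j : ℝ)) * Real.exp (-α S)) ∧
    (∀ S : Finset (Fin k), S.Nonempty →
      1 - (∏ j ∈ S, (M j : ℝ)) * Real.exp (-α S) ≤
        ∑ ω ∈ Finset.univ.filter (fun ω : Ω₀ × (∀ j, Fin (M j) → A j) × B =>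
          ∀ m : ∀ j, Fin (M j), (ω.1, fun j => ω.2.1 j (m j), ω.2.2) ∉ F), μ ω) := by
  classical
  -- Step 1: the single-codeword bound  T_S ≤ exp (-α S)
  have hT : ∀ S : Finset (Fin k), S.Nonempty →
      ∑ z ∈ Finset.univ.filter (fun z : Ω₀ × (∀ j, A j) × B => z ∈ cvProjS F S),
        q0 z.1 * (∏ j, qj j z.1 (z.2.1 j)) * qB z.1 z.2.2 ≤ Real.exp (-α S) := by
    intro S hS
    have hM0 : ∀ z : Ω₀ × (∀ j, A j) × B, cvMargS p ∅ z = q0 z.1 * qB z.1 z.2.2 := by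
      intro z
      rw [(hqB z.1 z.2.2).2, cvMargS]
      apply Finset.sum_congr _ (fun w _ => rfl)
      apply Finset.filter_congr
      intro w _
      simp
    have key : ∀ z ∈ Finset.univ.filter (fun z : Ω₀ × (∀ j, A j) × B => z ∈ cvProjS F S),
        q0 z.1 * (∏ j, qj j z.1 (z.2.1 j)) * qB z.1 z.2.2
          ≤ Real.exp (-α S) * (cvMargS p S z * ∏ j ∈ Sᶜ, qj j z.1 (z.2.1 j)) := by
      intro z hz
      rw [Finset.mem_filter] at hz
      have e1 : q0 z.1 * (∏ j, qj j z.1 (z.2.1 j)) * qB z.1 z.2.2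
          = (cvMargS p ∅ z * ∏ j ∈ S, qj j z.1 (z.2.1 j)) * ∏ j ∈ Sᶜ, qj j z.1 (z.2.1 j) := by
        rw [hM0 z, ← Finset.prod_mul_prod_compl S (fun j => qj j z.1 (z.2.1 j))]
        ring
      have h1 := hα S hS z hz.2
      have h2 : cvMargS p ∅ z * ∏ j ∈ S, qj j z.1 (z.2.1 j)
          ≤ Real.exp (-α S) * cvMargS p S z := by
        have h3 := mul_le_mul_of_nonneg_left h1 (Real.exp_pos (-α S)).le
        rwa [← mul_assoc, ← Real.exp_add, neg_add_cancel, Real.exp_zero, one_mul] at h3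
      rw [e1, ← mul_assoc]
      exact mul_le_mul_of_nonneg_right h2
        (Finset.prod_nonneg fun j _ => (hqj j z.1 (z.2.1 j)).1)
    calc ∑ z ∈ Finset.univ.filter (fun z : Ω₀ × (∀ j, A j) × B => z ∈ cvProjS F S),
          q0 z.1 * (∏ j, qj j z.1 (z.2.1 j)) * qB z.1 z.2.2
        ≤ ∑ z ∈ Finset.univ.filter (fun z : Ω₀ × (∀ j, A j) × B => z ∈ cvProjS F S),
            Real.exp (-α S) * (cvMargS p S z * ∏ j ∈ Sᶜ, qj j z.1 (z.2.1 j)) :=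
          Finset.sum_le_sum key
      _ ≤ ∑ z : Ω₀ × (∀ j, A j) × B,
            Real.exp (-α S) * (cvMargS p S z * ∏ j ∈ Sᶜ, qj j z.1 (z.2.1 j)) := by
          apply Finset.sum_le_sum_of_subset_of_nonneg (Finset.filter_subset _ _)
          intro z _ _
          apply mul_nonneg (Real.exp_pos _).le
          apply mul_nonneg (Finset.sum_nonneg fun w _ => hp0 w)
          exact Finset.prod_nonneg fun j _ => (hqj j z.1 (z.2.1 j)).1
      _ = Real.exp (-α S) * ∑ z : Ω₀ × (∀ j, A j) × B,
            cvMargS p S z * ∏ j ∈ Sᶜ, qj j z.1 (z.2.1 j) := by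
          rw [Finset.mul_sum]
      _ ≤ Real.exp (-α S) * 1 :=
          mul_le_mul_of_nonneg_left (cv_W p hp0 hp1 q0 qj hq0 hqj S) (Real.exp_pos _).le
      _ = Real.exp (-α S) := mul_one _
  -- Step 2: for each fixed m, the probability that the tuple lands in `cvProjS F S`
  have hfib : ∀ (S : Finset (Fin k)) (m : ∀ j, Fin (M j)),
      ∑ ω ∈ Finset.univ.filter (fun ω : Ω₀ × (∀ j, Fin (M j) → A j) × B =>
          (ω.1, fun j => ω.2.1 j (m j), ω.2.2) ∈ cvProjS F S), μ ω
      = ∑ z ∈ Finset.univ.filter (fun z : Ω₀ × (∀ j, A j) × B => z ∈ cvProjS F S),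
          q0 z.1 * (∏ j, qj j z.1 (z.2.1 j)) * qB z.1 z.2.2 := by
    intro S m
    have hmap : ∀ ω ∈ Finset.univ.filter (fun ω : Ω₀ × (∀ j, Fin (M j) → A j) × B =>
          (ω.1, fun j => ω.2.1 j (m j), ω.2.2) ∈ cvProjS F S),
        ((ω.1, fun j => ω.2.1 j (m j), ω.2.2) : Ω₀ × (∀ j, A j) × B)
          ∈ Finset.univ.filter (fun z : Ω₀ × (∀ j, A j) × B => z ∈ cvProjS F S) := by
      intro ω hω
      rw [Finset.mem_filter] at hω ⊢
      exact ⟨Finset.mem_univ _, hω.2⟩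
    rw [← Finset.sum_fiberwise_of_maps_to hmap μ]
    apply Finset.sum_congr rfl
    intro z hz
    rw [Finset.mem_filter] at hz
    rw [← hlaw m z]
    apply Finset.sum_congr _ (fun w _ => rfl)
    rw [Finset.filter_filter]
    apply Finset.filter_congr
    intro ω _
    constructor
    · rintro ⟨_, h⟩
      refine ⟨congrArg Prod.fst h, ?_, ?_⟩
      · intro j
        have := congrArg (fun z : Ω₀ × (∀ j, A j) × B => z.2.1 j) h
        exact this
      · exact congrArg (fun z : Ω₀ × (∀ j, A j) × B => z.2.2) h
    · rintro ⟨h1, h2, h3⟩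
      have he : ((ω.1, fun j => ω.2.1 j (m j), ω.2.2) : Ω₀ × (∀ j, A j) × B) = z := by
        have : (fun j => ω.2.1 j (m j)) = z.2.1 := funext h2
        rw [Prod.ext_iff, Prod.ext_iff]
        exact ⟨h1, this, h3⟩
      exact ⟨he ▸ hz.2, he⟩
  -- Step 3: union bound
  have part1 : ∀ S : Finset (Fin k), S.Nonempty →
      ∑ ω ∈ Finset.univ.filter (fun ω : Ω₀ × (∀ j, Fin (M j) → A j) × B =>
          ∃ m : ∀ j, Fin (M j), (ω.1, fun j => ω.2.1 j (m j), ω.2.2) ∈ F), μ ω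
        ≤ (∏ j ∈ S, (M j : ℝ)) * Real.exp (-α S) := by
    intro S hS
    by_cases hM : ∀ j, 0 < M j
    · have hne : ∀ j, Nonempty (Fin (M j)) := fun j => ⟨⟨0, hM j⟩⟩
      let d : ∀ j, Fin (M j) := fun j => (hne j).some
      let R : Finset (∀ j, Fin (M j)) :=
        Finset.univ.filter (fun m' => ∀ j ∉ S, m' j = d j)
      have hcard : (R.card : ℝ) = ∏ j ∈ S, (M j : ℝ) := by
        have hR : R = Fintype.piFinset
            (fun j => if j ∈ S then (Finset.univ : Finset (Fin (M j))) else {d j}) := by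
          ext m'
          simp only [R, Finset.mem_filter, Finset.mem_univ, true_and,
            Fintype.mem_piFinset]
          constructor
          · intro h j
            by_cases hj : j ∈ S
            · simp [hj]
            · simp [hj, h j hj]
          · intro h j hj
            have := h j
            simpa [hj] using this
        rw [hR, Fintype.card_piFinset]
        push_cast
        rw [← Finset.prod_mul_prod_compl S]
        have e2 : ∏ j ∈ Sᶜ, ((if j ∈ S then (Finset.univ : Finset (Fin (M j))) else {d j}).card : ℝ) = 1 := by
          apply Finset.prod_eq_one
          intro j hj
          simp [Finset.mem_compl.mp hj]
        have e1 : ∏ j ∈ S, ((if j ∈ S then (Finset.univ : Finset (Fin (M j))) else {d j}).card : ℝ)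
            = ∏ j ∈ S, (M j : ℝ) := by
          apply Finset.prod_congr rfl
          intro j hj
          simp [hj]
        rw [e1, e2, mul_one]
      have hunion : ∑ ω ∈ Finset.univ.filter (fun ω : Ω₀ × (∀ j, Fin (M j) → A j) × B =>
            ∃ m : ∀ j, Fin (M j), (ω.1, fun j => ω.2.1 j (m j), ω.2.2) ∈ F), μ ω
          ≤ ∑ m' ∈ R, ∑ ω ∈ Finset.univ.filter
              (fun ω : Ω₀ × (∀ j, Fin (M j) → A j) × B =>
                (ω.1, fun j => ω.2.1 j (m' j), ω.2.2) ∈ cvProjS F S), μ ω := by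
        calc ∑ ω ∈ Finset.univ.filter (fun ω : Ω₀ × (∀ j, Fin (M j) → A j) × B =>
              ∃ m : ∀ j, Fin (M j), (ω.1, fun j => ω.2.1 j (m j), ω.2.2) ∈ F), μ ω
            ≤ ∑ ω ∈ Finset.univ.filter (fun ω : Ω₀ × (∀ j, Fin (M j) → A j) × B =>
                ∃ m : ∀ j, Fin (M j), (ω.1, fun j => ω.2.1 j (m j), ω.2.2) ∈ F),
                ∑ m' ∈ R, (if (ω.1, fun j => ω.2.1 j (m' j), ω.2.2) ∈ cvProjS F S
                  then μ ω else 0) := by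
              apply Finset.sum_le_sum
              intro ω hω
              rw [Finset.mem_filter] at hω
              obtain ⟨m, hm⟩ := hω.2
              set m' : ∀ j, Fin (M j) := fun j => if j ∈ S then m j else d j with hm'
              have hm'R : m' ∈ R := by
                simp only [R, Finset.mem_filter, Finset.mem_univ, true_and]
                intro j hj
                simp [hm', hj]
              have hmem : ((ω.1, fun j => ω.2.1 j (m' j), ω.2.2) : Ω₀ × (∀ j, A j) × B)
                  ∈ cvProjS F S := by
                refine ⟨fun j => ω.2.1 j (m j), ?_, hm⟩
                intro j hj
                simp [hm', hj]
              have heq' : μ ω = (if ((ω.1, fun j => ω.2.1 j (m' j), ω.2.2) :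
                  Ω₀ × (∀ j, A j) × B) ∈ cvProjS F S then μ ω else 0) := by
                rw [if_pos hmem]
              refine heq'.le.trans ?_
              apply Finset.single_le_sum (f := fun m'' : ∀ j, Fin (M j) =>
                if ((ω.1, fun j => ω.2.1 j (m'' j), ω.2.2) :
                  Ω₀ × (∀ j, A j) × B) ∈ cvProjS F S then μ ω else 0)
                (fun m'' _ => by split <;> [exact hμ0 ω; exact le_rfl]) hm'R
          _ = ∑ m' ∈ R, ∑ ω ∈ Finset.univ.filter
                (fun ω : Ω₀ × (∀ j, Fin (M j) → A j) × B =>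
                  ∃ m : ∀ j, Fin (M j), (ω.1, fun j => ω.2.1 j (m j), ω.2.2) ∈ F),
                (if (ω.1, fun j => ω.2.1 j (m' j), ω.2.2) ∈ cvProjS F S
                  then μ ω else 0) := Finset.sum_comm
          _ ≤ ∑ m' ∈ R, ∑ ω : Ω₀ × (∀ j, Fin (M j) → A j) × B,
                (if (ω.1, fun j => ω.2.1 j (m' j), ω.2.2) ∈ cvProjS F S
                  then μ ω else 0) := by
              apply Finset.sum_le_sum
              intro m' _
              apply Finset.sum_le_sum_of_subset_of_nonneg (Finset.filter_subset _ _)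
              intro ω _ _
              split <;> [exact hμ0 ω; exact le_rfl]
          _ = ∑ m' ∈ R, ∑ ω ∈ Finset.univ.filter
                (fun ω : Ω₀ × (∀ j, Fin (M j) → A j) × B =>
                  (ω.1, fun j => ω.2.1 j (m' j), ω.2.2) ∈ cvProjS F S), μ ω := by
              apply Finset.sum_congr rfl
              intro m' _
              rw [Finset.sum_filter]
      calc ∑ ω ∈ Finset.univ.filter (fun ω : Ω₀ × (∀ j, Fin (M j) → A j) × B =>
            ∃ m : ∀ j, Fin (M j), (ω.1, fun j => ω.2.1 j (m j), ω.2.2) ∈ F), μ ω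
          ≤ ∑ m' ∈ R, ∑ ω ∈ Finset.univ.filter
              (fun ω : Ω₀ × (∀ j, Fin (M j) → A j) × B =>
                (ω.1, fun j => ω.2.1 j (m' j), ω.2.2) ∈ cvProjS F S), μ ω := hunion
        _ ≤ ∑ _m' ∈ R, Real.exp (-α S) := by
            apply Finset.sum_le_sum
            intro m' _
            rw [hfib S m']
            exact hT S hS
        _ = (R.card : ℝ) * Real.exp (-α S) := by
            rw [Finset.sum_const, nsmul_eq_mul]
        _ = (∏ j ∈ S, (M j : ℝ)) * Real.exp (-α S) := by rw [hcard]
    · push_neg at hM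
      obtain ⟨j₀, hj₀⟩ := hM
      have hj0 : M j₀ = 0 := Nat.le_zero.mp hj₀
      have hempty : Finset.univ.filter (fun ω : Ω₀ × (∀ j, Fin (M j) → A j) × B =>
          ∃ m : ∀ j, Fin (M j), (ω.1, fun j => ω.2.1 j (m j), ω.2.2) ∈ F) = ∅ := by
        apply Finset.filter_false_of_mem
        intro ω _
        rintro ⟨m, -⟩
        exact (hj0 ▸ m j₀ : Fin 0).elim0
      rw [hempty, Finset.sum_empty]
      apply mul_nonneg _ (Real.exp_pos _).le
      exact Finset.prod_nonneg fun j _ => Nat.cast_nonneg _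
  refine ⟨part1, ?_⟩
  intro S hS
  have hsplit := Finset.sum_filter_add_sum_filter_not Finset.univ
    (fun ω : Ω₀ × (∀ j, Fin (M j) → A j) × B =>
      ∃ m : ∀ j, Fin (M j), (ω.1, fun j => ω.2.1 j (m j), ω.2.2) ∈ F) μ
  rw [hμ1] at hsplit
  have heq : Finset.univ.filter (fun ω : Ω₀ × (∀ j, Fin (M j) → A j) × B =>
        ∀ m : ∀ j, Fin (M j), (ω.1, fun j => ω.2.1 j (m j), ω.2.2) ∉ F)
      = Finset.univ.filter (fun ω : Ω₀ × (∀ j, Fin (M j) → A j) × B =>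
        ¬ ∃ m : ∀ j, Fin (M j), (ω.1, fun j => ω.2.1 j (m j), ω.2.2) ∈ F) := by
    apply Finset.filter_congr
    intro ω _
    simp [not_exists]
  rw [heq]
  have := part1 S hS
  linarith
end

section
/- Pairwise second-moment bound: In the covering setup, fix (u₀,u_{k+1}) and let m ≠ m' ∈ M with nonempty agreement set S = {j : m_j = m'_j}. Assume the pairwise independence condition: given (U₀,U_{k+1})=(u₀,u_{k+1}), the joint law of (U_j(m_j))_j and (U_j(m'_j))_j is ∏_{j=1}^k p(u_j|u₀) · ∏_{j∈S^c} p(u'_j|u₀) with u_j = u'_j forced for j ∈ S. Let α_S and β_{S^c} be constants with α_S ≤ log(p(u_S|u₀,u_{k+1})/∏_{j∈S}p(u_j|u₀)) on F_S and β_{S^c} ≤ log(p(u_{S^c}|u₀,u_S,u_{k+1})/∏_{j∈S^c}p(u_j|u₀)) on F. Then E[Z_m Z_{m'} | u₀, u_{k+1}] ≤ e^{−α_S − 2β_{S^c}}. -/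
open Finset Real

open scoped Classical in
/-- **Pairwise second-moment bound.**  Fix `(u₀,u_{k+1})` of positive
probability and distinct indices `m ≠ m'` with nonempty agreement set
`S = {j : m_j = m'_j}`.  Under the pairwise independence condition of
Assumption I (the conditional joint law of the two codeword tuples is
`∏_j p(u_j|u₀) · ∏_{j∈Sᶜ} p(u'_j|u₀)`), and with change-of-measure constants
`α_S ≤ log(p(u_S|u₀,u_{k+1})/∏_{j∈S}p(u_j|u₀))` on `F_S` and
`β_{Sᶜ} ≤ log(p(u_{Sᶜ}|u₀,u_S,u_{k+1})/∏_{j∈Sᶜ}p(u_j|u₀))` on `F`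
(both stated multiplicatively), one has
`E[Z_m Z_{m'} | u₀, u_{k+1}] ≤ e^{−α_S − 2β_{Sᶜ}}`. -/
theorem covering_stmt12
    {k : ℕ} {Ω₀ B : Type*} {A : Fin k → Type*}
    [Fintype Ω₀] [Fintype B] [∀ j, Fintype (A j)]
    [DecidableEq Ω₀] [DecidableEq B] [∀ j, DecidableEq (A j)]
    (p : Ω₀ × (∀ j, A j) × B → ℝ)
    (hp0 : ∀ z, 0 ≤ p z) (hp1 : ∑ z, p z = 1)
    (qj : ∀ j : Fin k, Ω₀ → A j → ℝ) (hqj : ∀ j u₀ a, 0 ≤ qj j u₀ a)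
    (M : Fin k → ℕ)
    (u₀ : Ω₀) (b : B)
    -- the pair (u₀,u_{k+1}) has positive probability
    (hpos : 0 < ∑ z ∈ Finset.univ.filter (fun z : Ω₀ × (∀ j, A j) × B =>
        z.1 = u₀ ∧ z.2.2 = b), p z)
    (ν : (∀ j, Fin (M j) → A j) → ℝ)
    (hν0 : ∀ c, 0 ≤ ν c) (hν1 : ∑ c, ν c = 1)
    (m m' : ∀ j, Fin (M j)) (hmm' : m ≠ m')
    (S : Finset (Fin k)) (hS : S = Finset.univ.filter (fun j => m j = m' j))
    (hSne : S.Nonempty)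
    -- Assumption I: conditional pairwise joint law of the two codeword tuples
    (hνpair : ∀ (x x' : ∀ j, A j), (∀ j, m j = m' j → x j = x' j) →
      ∑ c ∈ Finset.univ.filter (fun c : ∀ j, Fin (M j) → A j =>
          (∀ j, c j (m j) = x j) ∧ ∀ j, c j (m' j) = x' j), ν c
        = (∏ j, qj j u₀ (x j)) * ∏ j ∈ Sᶜ, qj j u₀ (x' j))
    (F : Set (Ω₀ × (∀ j, A j) × B))
    (αS βSc : ℝ)
    (hα : ∀ z ∈ cvProjS F S,
      Real.exp αS * (cvMargS p ∅ z * ∏ j ∈ S, qj j z.1 (z.2.1 j))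
        ≤ cvMargS p S z)
    (hβ : ∀ z ∈ F,
      Real.exp βSc * (cvMargS p S z * ∏ j ∈ Sᶜ, qj j z.1 (z.2.1 j))
        ≤ p z) :
    ∑ c : ∀ j, Fin (M j) → A j, ν c *
        ((if (u₀, fun j => c j (m j), b) ∈ F then (1:ℝ) else 0) *
         (if (u₀, fun j => c j (m' j), b) ∈ F then (1:ℝ) else 0))
      ≤ Real.exp (-αS - 2 * βSc) := by
  classical
  set P₀ := ∑ z ∈ Finset.univ.filter (fun z : Ω₀ × (∀ j, A j) × B =>
      z.1 = u₀ ∧ z.2.2 = b), p z with hP₀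
  set C := Real.exp (-αS - 2 * βSc) with hC
  have hCpos : 0 < C := Real.exp_pos _
  -- the marginal over S as an explicit sum over full middle coordinates
  have hpSfil : ∀ x : ∀ j, A j, cvMargS p S (u₀, x, b)
      = ∑ x' ∈ Finset.univ.filter (fun x' : ∀ j, A j => ∀ j ∈ S, x j = x' j),
          p (u₀, x', b) := by
    intro x
    unfold cvMargS
    refine Finset.sum_nbij' (fun w => w.2.1) (fun x' => (u₀, x', b)) ?_ ?_ ?_ ?_ ?_
    · intro w hw
      simp only [Finset.mem_filter, Finset.mem_univ, true_and] at hw ⊢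
      exact fun j hj => (hw.2.1 j hj).symm
    · intro x' hx'
      simp only [Finset.mem_filter, Finset.mem_univ, true_and] at hx'
      exact Finset.mem_filter.2 ⟨Finset.mem_univ _, rfl, fun j hj => (hx' j hj).symm, rfl⟩
    · intro w hw
      obtain ⟨w1, w2, w3⟩ := w
      simp only [Finset.mem_filter, Finset.mem_univ, true_and] at hw
      simp [hw.1, hw.2.2]
    · intro x' _; rfl
    · intro w hw
      obtain ⟨w1, w2, w3⟩ := w
      simp only [Finset.mem_filter, Finset.mem_univ, true_and] at hw
      simp [hw.1, hw.2.2]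
  have hpS_if : ∀ x : ∀ j, A j, cvMargS p S (u₀, x, b)
      = ∑ x' : ∀ j, A j, if (∀ j ∈ S, x j = x' j) then p (u₀, x', b) else 0 := by
    intro x; rw [hpSfil x, Finset.sum_filter]
  have hpSnn : ∀ x : ∀ j, A j, 0 ≤ cvMargS p S (u₀, x, b) := by
    intro x; rw [hpSfil x]; exact Finset.sum_nonneg fun _ _ => hp0 _
  have hple : ∀ x : ∀ j, A j, p (u₀, x, b) ≤ cvMargS p S (u₀, x, b) := by
    intro x; rw [hpSfil x]
    refine Finset.single_le_sum (f := fun x' : ∀ j, A j => p (u₀, x', b)) (fun i _ => hp0 _) ?_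
    exact Finset.mem_filter.2 ⟨Finset.mem_univ x, fun j _ => rfl⟩
  have hpS_agree : ∀ x x' : ∀ j, A j, (∀ j ∈ S, x j = x' j) →
      cvMargS p S (u₀, x, b) = cvMargS p S (u₀, x', b) := by
    intro x x' hag
    rw [hpSfil x, hpSfil x']
    apply Finset.sum_congr _ (fun _ _ => rfl)
    apply Finset.filter_congr
    intro w _
    constructor
    · intro h j hj; rw [← hag j hj]; exact h j hj
    · intro h j hj; rw [hag j hj]; exact h j hj
  have hM0 : ∀ x : ∀ j, A j, cvMargS p ∅ (u₀, x, b) = P₀ := by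
    intro x
    rw [hP₀]; unfold cvMargS
    congr 1
    apply Finset.filter_congr
    intro w _; simp
  have hP0_eq : P₀ = ∑ x : ∀ j, A j, p (u₀, x, b) := by
    rw [hP₀]
    refine Finset.sum_nbij' (fun w => w.2.1) (fun x => (u₀, x, b)) ?_ ?_ ?_ ?_ ?_
    · intro w _; exact Finset.mem_univ _
    · intro x _
      exact Finset.mem_filter.2 ⟨Finset.mem_univ _, rfl, rfl⟩
    · intro w hw
      obtain ⟨w1, w2, w3⟩ := w
      simp only [Finset.mem_filter, Finset.mem_univ, true_and] at hw
      simp [hw.1, hw.2]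
    · intro x _; rfl
    · intro w hw
      obtain ⟨w1, w2, w3⟩ := w
      simp only [Finset.mem_filter, Finset.mem_univ, true_and] at hw
      simp [hw.1, hw.2]
  -- the bound function
  set Bnd : ((∀ j, A j) × (∀ j, A j)) → ℝ := fun pr =>
    if (∀ j ∈ S, pr.1 j = pr.2 j) then
      C * (p (u₀, pr.1, b) * (p (u₀, pr.2, b) / cvMargS p S (u₀, pr.1, b))) / P₀
    else 0 with hBnd
  have hBndnn : ∀ pr, 0 ≤ Bnd pr := by
    intro pr
    rw [hBnd]
    dsimp only
    split
    · apply div_nonneg _ hpos.le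
      exact mul_nonneg hCpos.le (mul_nonneg (hp0 _) (div_nonneg (hp0 _) (hpSnn _)))
    · rfl
  -- fiberwise decomposition of the LHS
  have key : (∑ c : ∀ j, Fin (M j) → A j, ν c *
        ((if (u₀, fun j => c j (m j), b) ∈ F then (1:ℝ) else 0) *
         (if (u₀, fun j => c j (m' j), b) ∈ F then (1:ℝ) else 0)))
      = ∑ pr : (∀ j, A j) × (∀ j, A j),
          (∑ c ∈ Finset.univ.filter (fun c : ∀ j, Fin (M j) → A j =>
              ((fun j => c j (m j)), (fun j => c j (m' j))) = pr), ν c) *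
          ((if (u₀, pr.1, b) ∈ F then (1:ℝ) else 0) *
           (if (u₀, pr.2, b) ∈ F then (1:ℝ) else 0)) := by
    rw [← Finset.sum_fiberwise Finset.univ
      (fun c : ∀ j, Fin (M j) → A j => ((fun j => c j (m j)), (fun j => c j (m' j))))
      (fun c => ν c *
        ((if (u₀, fun j => c j (m j), b) ∈ F then (1:ℝ) else 0) *
         (if (u₀, fun j => c j (m' j), b) ∈ F then (1:ℝ) else 0)))]
    refine Finset.sum_congr rfl fun pr _ => ?_
    rw [Finset.sum_mul]
    refine Finset.sum_congr rfl fun c hc => ?_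
    simp only [Finset.mem_filter, Finset.mem_univ, true_and] at hc
    rw [← hc]
  -- fiber weights
  have hW : ∀ pr : (∀ j, A j) × (∀ j, A j),
      (∑ c ∈ Finset.univ.filter (fun c : ∀ j, Fin (M j) → A j =>
          ((fun j => c j (m j)), (fun j => c j (m' j))) = pr), ν c)
      = if (∀ j ∈ S, pr.1 j = pr.2 j) then
          (∏ j, qj j u₀ (pr.1 j)) * ∏ j ∈ Sᶜ, qj j u₀ (pr.2 j) else 0 := by
    rintro ⟨x, x'⟩
    by_cases hag : ∀ j ∈ S, x j = x' j
    · rw [if_pos hag, ← hνpair x x' (fun j hj => hag j (by rw [hS]; simp [hj]))]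
      apply Finset.sum_congr _ (fun _ _ => rfl)
      apply Finset.filter_congr
      intro c _
      simp [Prod.ext_iff, funext_iff]
    · rw [if_neg hag]
      refine Finset.sum_eq_zero fun c hc => absurd ?_ hag
      simp only [Finset.mem_filter, Finset.mem_univ, true_and, Prod.ext_iff,
        funext_iff] at hc
      intro j hj
      rw [hS, Finset.mem_filter] at hj
      rw [← hc.1 j, ← hc.2 j, hj.2]
  -- pointwise bound
  have hpt : ∀ pr : (∀ j, A j) × (∀ j, A j),
      (if (∀ j ∈ S, pr.1 j = pr.2 j) then
          (∏ j, qj j u₀ (pr.1 j)) * ∏ j ∈ Sᶜ, qj j u₀ (pr.2 j) else 0) *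
        ((if (u₀, pr.1, b) ∈ F then (1:ℝ) else 0) *
         (if (u₀, pr.2, b) ∈ F then (1:ℝ) else 0))
      ≤ Bnd pr := by
    rintro ⟨x, x'⟩
    by_cases hag : ∀ j ∈ S, x j = x' j
    swap
    · rw [hBnd]; simp [hag]
    rw [hBnd]
    dsimp only
    rw [if_pos hag, if_pos hag]
    by_cases hF1 : (u₀, x, b) ∈ F
    swap
    · rw [if_neg hF1, zero_mul, mul_zero]
      apply div_nonneg _ hpos.le
      exact mul_nonneg hCpos.le (mul_nonneg (hp0 _) (div_nonneg (hp0 _) (hpSnn _)))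
    by_cases hF2 : (u₀, x', b) ∈ F
    swap
    · rw [if_neg hF2, mul_zero, mul_zero]
      apply div_nonneg _ hpos.le
      exact mul_nonneg hCpos.le (mul_nonneg (hp0 _) (div_nonneg (hp0 _) (hpSnn _)))
    rw [if_pos hF1, if_pos hF2, mul_one, mul_one]
    rw [← Finset.prod_mul_prod_compl S (fun j => qj j u₀ (x j))]
    set e1 := ∏ j ∈ S, qj j u₀ (x j) with he1
    set e2 := ∏ j ∈ Sᶜ, qj j u₀ (x j) with he2
    set e3 := ∏ j ∈ Sᶜ, qj j u₀ (x' j) with he3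
    have he1nn : 0 ≤ e1 := Finset.prod_nonneg fun _ _ => hqj _ _ _
    have he2nn : 0 ≤ e2 := Finset.prod_nonneg fun _ _ => hqj _ _ _
    have he3nn : 0 ≤ e3 := Finset.prod_nonneg fun _ _ => hqj _ _ _
    set pS := cvMargS p S (u₀, x, b) with hpSdef
    have hA : Real.exp αS * (P₀ * e1) ≤ pS := by
      have h := hα (u₀, x, b) ⟨x, fun j _ => rfl, hF1⟩
      rw [hM0 x] at h
      exact h
    have hB1 : Real.exp βSc * (pS * e2) ≤ p (u₀, x, b) := hβ (u₀, x, b) hF1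
    have hB2 : Real.exp βSc * (pS * e3) ≤ p (u₀, x', b) := by
      have h : Real.exp βSc * (cvMargS p S (u₀, x', b) * e3) ≤ p (u₀, x', b) :=
        hβ (u₀, x', b) hF2
      have e : cvMargS p S (u₀, x', b) = pS := (hpS_agree x x' hag).symm
      rw [e] at h
      exact h
    rcases (hpSnn x).eq_or_lt with hpS0 | hpSpos
    · rw [hpSdef, ← hpS0] at hA
      have he1le : e1 ≤ 0 := by nlinarith [Real.exp_pos αS, hpos, hA, mul_pos (Real.exp_pos αS) hpos]
      have he10 : e1 = 0 := le_antisymm he1le he1nn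
      rw [he10, zero_mul, zero_mul]
      apply div_nonneg _ hpos.le
      exact mul_nonneg hCpos.le (mul_nonneg (hp0 _) (div_nonneg (hp0 _) (hpSnn _)))
    · have h1 : e1 ≤ pS / (Real.exp αS * P₀) := by
        rw [le_div_iff₀ (by positivity)]
        calc e1 * (Real.exp αS * P₀) = Real.exp αS * (P₀ * e1) := by ring
          _ ≤ pS := hA
      have h2 : e2 ≤ p (u₀, x, b) / (Real.exp βSc * pS) := by
        rw [le_div_iff₀ (by positivity)]
        calc e2 * (Real.exp βSc * pS) = Real.exp βSc * (pS * e2) := by ring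
          _ ≤ p (u₀, x, b) := hB1
      have h3 : e3 ≤ p (u₀, x', b) / (Real.exp βSc * pS) := by
        rw [le_div_iff₀ (by positivity)]
        calc e3 * (Real.exp βSc * pS) = Real.exp βSc * (pS * e3) := by ring
          _ ≤ p (u₀, x', b) := hB2
      have hr1nn : 0 ≤ pS / (Real.exp αS * P₀) := by positivity
      have hr2nn : 0 ≤ p (u₀, x, b) / (Real.exp βSc * pS) :=
        div_nonneg (hp0 _) (by positivity)
      have step1 : e1 * e2 ≤ (pS / (Real.exp αS * P₀)) *
          (p (u₀, x, b) / (Real.exp βSc * pS)) :=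
        mul_le_mul h1 h2 he2nn hr1nn
      have step2 : e1 * e2 * e3 ≤ (pS / (Real.exp αS * P₀)) *
          (p (u₀, x, b) / (Real.exp βSc * pS)) *
          (p (u₀, x', b) / (Real.exp βSc * pS)) :=
        mul_le_mul step1 h3 he3nn (mul_nonneg hr1nn hr2nn)
      refine step2.trans_eq ?_
      have hCsplit : C = (Real.exp αS)⁻¹ * ((Real.exp βSc)⁻¹ * (Real.exp βSc)⁻¹) := by
        rw [hC, ← Real.exp_neg αS, ← Real.exp_neg βSc, ← Real.exp_add, ← Real.exp_add]
        congr 1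
        ring
      rw [hCsplit]
      have hexpα := (Real.exp_pos αS).ne'
      have hexpβ := (Real.exp_pos βSc).ne'
      field_simp
  -- summing the bound
  have hinner : ∀ x : ∀ j, A j,
      (∑ x' : ∀ j, A j, Bnd (x, x')) = C * p (u₀, x, b) / P₀ := by
    intro x
    by_cases hpS0 : cvMargS p S (u₀, x, b) = 0
    · have hpx : p (u₀, x, b) = 0 := le_antisymm (hpS0 ▸ hple x) (hp0 _)
      rw [hpx]
      rw [Finset.sum_eq_zero]
      · ring
      · intro x' _
        rw [hBnd]
        dsimp only
        split
        · rw [hpx]; ring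
        · rfl
    · have hstep : ∀ x' : ∀ j, A j, Bnd (x, x') =
          (C * p (u₀, x, b) / P₀ / cvMargS p S (u₀, x, b)) *
          (if (∀ j ∈ S, x j = x' j) then p (u₀, x', b) else 0) := by
        intro x'
        rw [hBnd]
        dsimp only
        split_ifs with h
        · ring
        · ring
      rw [Finset.sum_congr rfl (fun x' _ => hstep x'), ← Finset.mul_sum, ← hpS_if x]
      field_simp
  have hBndsum : (∑ pr : (∀ j, A j) × (∀ j, A j), Bnd pr) = C := by
    rw [Fintype.sum_prod_type]
    rw [Finset.sum_congr rfl (fun x _ => hinner x)]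
    rw [← Finset.sum_div, ← Finset.mul_sum, ← hP0_eq]
    field_simp
  calc (∑ c : ∀ j, Fin (M j) → A j, ν c *
        ((if (u₀, fun j => c j (m j), b) ∈ F then (1:ℝ) else 0) *
         (if (u₀, fun j => c j (m' j), b) ∈ F then (1:ℝ) else 0)))
      = ∑ pr : (∀ j, A j) × (∀ j, A j),
          (∑ c ∈ Finset.univ.filter (fun c : ∀ j, Fin (M j) → A j =>
              ((fun j => c j (m j)), (fun j => c j (m' j))) = pr), ν c) *
          ((if (u₀, pr.1, b) ∈ F then (1:ℝ) else 0) *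
           (if (u₀, pr.2, b) ∈ F then (1:ℝ) else 0)) := key
    _ ≤ ∑ pr : (∀ j, A j) × (∀ j, A j), Bnd pr :=
        Finset.sum_le_sum fun pr _ => by rw [hW pr]; exact hpt pr
    _ = C := hBndsum
end

section
/- Multivariate covering lemma (converse/packing part, weak typicality): With the same setup, suppose M_j ≤ e^{nR_j} for all j ∈ [k] and P(∃ m : (U₀ⁿ, U₁ⁿ(m₁),…,U_kⁿ(m_k), U_{k+1}ⁿ) ∈ A_δ^{(n)}) → 1 as n → ∞. Then for every nonempty S ⊆ [k], ∑_{j∈S} R_j ≥ ∑_{j∈S} H(U_j|U₀) − H(U_S|U₀,U_{k+1}) − 2(|S|+1)δ. -/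
open Finset Real

/-- Marginal of the joint pmf `p` on `U₀ × U_{[k]} × U_{k+1}` onto the subset
of coordinates consisting of: `u₀` (if `b0`), the `u_j` for `j ∈ S`, and
`u_{k+1}` (if `bB`); evaluated at a full tuple `z`. -/
def wMarg {k : ℕ} {Ω₀ B : Type*} {A : Fin k → Type*}
    [Fintype Ω₀] [Fintype B] [∀ j, Fintype (A j)]
    [DecidableEq Ω₀] [DecidableEq B] [∀ j, DecidableEq (A j)]
    (p : Ω₀ × (∀ j, A j) × B → ℝ) (b0 : Bool) (S : Finset (Fin k)) (bB : Bool)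
    (z : Ω₀ × (∀ j, A j) × B) : ℝ :=
  ∑ w ∈ Finset.univ.filter (fun w : Ω₀ × (∀ j, A j) × B =>
    (b0 = true → w.1 = z.1) ∧ (∀ j ∈ S, w.2.1 j = z.2.1 j) ∧
      (bB = true → w.2.2 = z.2.2)), p w

/-- Joint Shannon entropy (in nats) of the selected subset of coordinates. -/
noncomputable def wEnt {k : ℕ} {Ω₀ B : Type*} {A : Fin k → Type*}
    [Fintype Ω₀] [Fintype B] [∀ j, Fintype (A j)]
    [DecidableEq Ω₀] [DecidableEq B] [∀ j, DecidableEq (A j)]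
    (p : Ω₀ × (∀ j, A j) × B → ℝ) (b0 : Bool) (S : Finset (Fin k)) (bB : Bool) : ℝ :=
  -∑ z : Ω₀ × (∀ j, A j) × B, p z * Real.log (wMarg p b0 S bB z)

/-- The weakly `δ`-typical set `A_δ^{(n)}`. -/
noncomputable def wTypical {k : ℕ} {Ω₀ B : Type*} {A : Fin k → Type*}
    [Fintype Ω₀] [Fintype B] [∀ j, Fintype (A j)]
    [DecidableEq Ω₀] [DecidableEq B] [∀ j, DecidableEq (A j)]
    (p : Ω₀ × (∀ j, A j) × B → ℝ) (n : ℕ) (δ : ℝ) :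
    Set (Fin n → Ω₀ × (∀ j, A j) × B) :=
  {u | ∀ (b0 : Bool) (S : Finset (Fin k)) (bB : Bool),
    (b0 = true ∨ S.Nonempty ∨ bB = true) →
    |(-(1 / (n : ℝ)) * ∑ i, Real.log (wMarg p b0 S bB (u i))) -
      wEnt p b0 S bB| ≤ δ}

/-- Marginal pmf of `U₀`. -/
def pr0 {k : ℕ} {Ω₀ B : Type*} {A : Fin k → Type*}
    [Fintype Ω₀] [Fintype B] [∀ j, Fintype (A j)] [DecidableEq Ω₀]
    (p : Ω₀ × (∀ j, A j) × B → ℝ) (u₀ : Ω₀) : ℝ :=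
  ∑ z ∈ Finset.univ.filter (fun z : Ω₀ × (∀ j, A j) × B => z.1 = u₀), p z

/-- Joint marginal pmf of `(U₀, U_j)`. -/
def pr0j {k : ℕ} {Ω₀ B : Type*} {A : Fin k → Type*}
    [Fintype Ω₀] [Fintype B] [∀ j, Fintype (A j)] [DecidableEq Ω₀]
    [∀ j, DecidableEq (A j)]
    (p : Ω₀ × (∀ j, A j) × B → ℝ) (j : Fin k) (u₀ : Ω₀) (a : A j) : ℝ :=
  ∑ z ∈ Finset.univ.filter
    (fun z : Ω₀ × (∀ j, A j) × B => z.1 = u₀ ∧ z.2.1 j = a), p z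

/-- Joint marginal pmf of `(U₀, U_{k+1})`. -/
def pr0B {k : ℕ} {Ω₀ B : Type*} {A : Fin k → Type*}
    [Fintype Ω₀] [Fintype B] [∀ j, Fintype (A j)] [DecidableEq Ω₀]
    [DecidableEq B]
    (p : Ω₀ × (∀ j, A j) × B → ℝ) (u₀ : Ω₀) (b : B) : ℝ :=
  ∑ z ∈ Finset.univ.filter
    (fun z : Ω₀ × (∀ j, A j) × B => z.1 = u₀ ∧ z.2.2 = b), p z

set_option linter.unusedSectionVars false
set_option maxHeartbeats 2000000


section aux
variable {k : ℕ} {Ω₀ B : Type*} {A : Fin k → Type*}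
    [Fintype Ω₀] [Fintype B] [∀ j, Fintype (A j)]
    [DecidableEq Ω₀] [DecidableEq B] [∀ j, DecidableEq (A j)]
    (p : Ω₀ × (∀ j, A j) × B → ℝ)

lemma wMarg_eq_pr0 (z : Ω₀ × (∀ j, A j) × B) : wMarg p true ∅ false z = pr0 p z.1 := by
  unfold wMarg pr0; congr 1; ext w; simp

lemma wMarg_eq_pr0j (j : Fin k) (z : Ω₀ × (∀ j, A j) × B) :
    wMarg p true {j} false z = pr0j p j z.1 (z.2.1 j) := by
  unfold wMarg pr0j; congr 1; ext w; simp

lemma wMarg_eq_pr0B (z : Ω₀ × (∀ j, A j) × B) :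
    wMarg p true ∅ true z = pr0B p z.1 z.2.2 := by
  unfold wMarg pr0B; congr 1; ext w; simp

lemma pr0_pos (hp : ∀ z, 0 < p z) [Nonempty (∀ j, A j)] [Nonempty B] (u : Ω₀) :
    0 < pr0 p u := by
  apply Finset.sum_pos (fun w _ => hp w)
  obtain ⟨a⟩ := ‹Nonempty (∀ j, A j)›
  obtain ⟨b⟩ := ‹Nonempty B›
  exact ⟨(u, a, b), by simp⟩

lemma sum_pr0j (j : Fin k) (u : Ω₀) : ∑ a : A j, pr0j p j u a = pr0 p u := by
  unfold pr0j pr0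
  simp only [Finset.sum_filter]
  rw [Finset.sum_comm]
  congr 1; ext z
  by_cases h : z.1 = u <;> simp [h]
end aux

set_option linter.unusedSectionVars false
set_option maxHeartbeats 1000000
section aux3
variable {k : ℕ} {Ω₀ B : Type*} {A : Fin k → Type*}
    [Fintype Ω₀] [Fintype B] [∀ j, Fintype (A j)]
    [DecidableEq Ω₀] [DecidableEq B] [∀ j, DecidableEq (A j)]
    (p : Ω₀ × (∀ j, A j) × B → ℝ)

lemma wMarg_pos (hp : ∀ z, 0 < p z) (b0 : Bool) (S : Finset (Fin k)) (bB : Bool) (z) :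
    0 < wMarg p b0 S bB z := by
  apply Finset.sum_pos (fun w _ => hp w)
  exact ⟨z, by simp⟩

lemma wMarg_congr (b0 : Bool) (S : Finset (Fin k)) (bB : Bool) {z z'}
    (h0 : b0 = true → z.1 = z'.1) (hS : ∀ j ∈ S, z.2.1 j = z'.2.1 j)
    (hB : bB = true → z.2.2 = z'.2.2) :
    wMarg p b0 S bB z = wMarg p b0 S bB z' := by
  unfold wMarg
  congr 1
  ext w
  simp only [Finset.mem_filter, Finset.mem_univ, true_and]
  constructor
  · rintro ⟨a, b, c⟩
    exact ⟨fun hb => (a hb).trans (h0 hb), fun j hj => (b j hj).trans (hS j hj),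
      fun hb => (c hb).trans (hB hb)⟩
  · rintro ⟨a, b, c⟩
    exact ⟨fun hb => (a hb).trans (h0 hb).symm, fun j hj => (b j hj).trans (hS j hj).symm,
      fun hb => (c hb).trans (hB hb).symm⟩

lemma pin_sum (S : Finset (Fin k)) (x : ∀ j, A j) (r : ∀ j, A j → ℝ)
    (hr : ∀ j, j ∉ S → ∑ a, r j a = 1) :
    ∑ a : ∀ j, A j, (if ∀ j ∈ S, x j = a j then ∏ j ∈ Sᶜ, r j (a j) else 0) = 1 := by
  classical
  set t : ∀ j, Finset (A j) := fun j => if j ∈ S then {x j} else Finset.univ with ht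
  have hfil : (Finset.univ.filter (fun a : ∀ j, A j => ∀ j ∈ S, x j = a j))
      = Fintype.piFinset t := by
    ext a
    simp only [Finset.mem_filter, Finset.mem_univ, true_and, Fintype.mem_piFinset, ht]
    constructor
    · intro h j
      by_cases hj : j ∈ S
      · simp [hj, (h j hj).symm]
      · simp [hj]
    · intro h j hj
      have := h j
      simp only [hj, if_true, Finset.mem_singleton] at this
      exact this.symm
  rw [← Finset.sum_filter, hfil]
  have hcompl : (Sᶜ : Finset (Fin k)) = Finset.univ.filter (fun j => j ∉ S) := by
    ext j; simp
  have hcongr : ∀ a ∈ Fintype.piFinset t, (∏ j ∈ Sᶜ, r j (a j))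
      = ∏ j, (if j ∈ S then 1 else r j (a j)) := by
    intro a _
    rw [hcompl, Finset.prod_filter]
    exact Finset.prod_congr rfl (fun j _ => by by_cases hj : j ∈ S <;> simp [hj])
  rw [Finset.sum_congr rfl hcongr,
    ← Finset.prod_univ_sum t (fun j b => if j ∈ S then 1 else r j b)]
  apply Finset.prod_eq_one
  intro j _
  by_cases hj : j ∈ S <;> simp [ht, hj, hr j]

lemma singleLetter (hp : ∀ z, 0 < p z) (hp1 : ∑ z, p z = 1) (S : Finset (Fin k)) :
    ∑ z : Ω₀ × (∀ j, A j) × B,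
      wMarg p true S true z * ∏ j ∈ Sᶜ, (pr0j p j z.1 (z.2.1 j) / pr0 p z.1) = 1 := by
  classical
  have hpr0 : ∀ u : Ω₀, ∀ z : Ω₀ × (∀ j, A j) × B, 0 < pr0 p u := by
    intro u z
    have := wMarg_pos p hp true ∅ false (u, z.2.1, z.2.2)
    rwa [wMarg_eq_pr0] at this
  obtain ⟨z0⟩ : Nonempty (Ω₀ × (∀ j, A j) × B) := by
    by_contra h
    rw [not_nonempty_iff] at h
    rw [Finset.univ_eq_empty, Finset.sum_empty] at hp1
    norm_num at hp1
  simp only [wMarg, Finset.sum_filter, Finset.sum_mul, true_implies]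
  rw [Finset.sum_comm]
  have hterm : ∀ w : Ω₀ × (∀ j, A j) × B,
      (∑ z : Ω₀ × (∀ j, A j) × B,
        (if w.1 = z.1 ∧ (∀ j ∈ S, w.2.1 j = z.2.1 j) ∧ w.2.2 = z.2.2 then p w else 0) *
          ∏ j ∈ Sᶜ, (pr0j p j z.1 (z.2.1 j) / pr0 p z.1)) = p w := by
    intro w
    have hsimp : ∀ z : Ω₀ × (∀ j, A j) × B,
        (if w.1 = z.1 ∧ (∀ j ∈ S, w.2.1 j = z.2.1 j) ∧ w.2.2 = z.2.2 then p w else 0) *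
          ∏ j ∈ Sᶜ, (pr0j p j z.1 (z.2.1 j) / pr0 p z.1)
        = if w.1 = z.1 then (if w.2.2 = z.2.2 then
            (if ∀ j ∈ S, w.2.1 j = z.2.1 j then
              p w * ∏ j ∈ Sᶜ, (pr0j p j w.1 (z.2.1 j) / pr0 p w.1) else 0) else 0) else 0 := by
      intro z
      by_cases h1 : w.1 = z.1
      · by_cases h3 : w.2.2 = z.2.2
        · by_cases h2 : ∀ j ∈ S, w.2.1 j = z.2.1 j
          · rw [if_pos ⟨h1, h2, h3⟩, if_pos h1, if_pos h3, if_pos h2, h1]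
          · simp [h1, h2, h3]
        · simp [h1, h3]
      · simp [h1]
    rw [Finset.sum_congr rfl (fun z _ => hsimp z), Fintype.sum_prod_type]
    simp only [Finset.sum_ite_irrel, Finset.sum_const_zero, Finset.sum_ite_eq,
      Finset.mem_univ, if_true]
    rw [Fintype.sum_prod_type]
    simp only [Finset.sum_ite_eq, Finset.mem_univ, if_true]
    have hpull : ∀ a : ∀ j, A j,
        (if ∀ j ∈ S, w.2.1 j = a j then
            p w * ∏ j ∈ Sᶜ, pr0j p j w.1 (a j) / pr0 p w.1 else 0)
        = p w * (if ∀ j ∈ S, w.2.1 j = a j then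
            ∏ j ∈ Sᶜ, pr0j p j w.1 (a j) / pr0 p w.1 else 0) := by
      intro a; split <;> simp
    rw [Finset.sum_congr rfl (fun a _ => hpull a), ← Finset.mul_sum,
      pin_sum S w.2.1 (fun j a => pr0j p j w.1 a / pr0 p w.1) ?_, mul_one]
    intro j hj
    rw [← Finset.sum_div, sum_pr0j, div_self (ne_of_gt (hpr0 w.1 z0))]
  rw [Finset.sum_congr rfl (fun w _ => hterm w)]
  exact hp1
end aux3


lemma typ_bound {n L H δ : ℝ} (hn : 0 < n) (h : |(-(1/n) * L) - H| ≤ δ) :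
    -(n*(H+δ)) ≤ L ∧ L ≤ n*(δ - H) := by
  rw [abs_le] at h
  obtain ⟨h1, h2⟩ := h
  have e : -(1/n) * L = -(L/n) := by field_simp
  rw [e] at h1 h2
  constructor
  · have hd : -L / n ≤ H + δ := by rw [neg_div]; linarith
    have := (div_le_iff₀ hn).mp hd
    nlinarith
  · have hd : L / n ≤ δ - H := by
      have h1' : -(L/n) ≥ H - δ := by linarith
      linarith
    have := (div_le_iff₀ hn).mp hd
    nlinarith


open scoped Classical in
/-- **Multivariate covering lemma (converse / packing part, weak
typicality).**  Let `p(u₀,…,u_{k+1})` be a full-support joint pmf on finite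
alphabets and `δ > 0`.  Suppose `M_n j ≤ e^{nR_j}` for all `j`, and for each
`m` the tuple `(U₀ⁿ, U₁ⁿ(m₁),…,U_kⁿ(m_k), U_{k+1}ⁿ)` consists of `n` i.i.d.
copies of a tuple with law `p(u₀)·∏_j p(u_j|u₀)·p(u_{k+1}|u₀)` (no joint
independence across `m` is needed).  If
`P(∃ m : (U₀ⁿ, U₁ⁿ(m₁),…,U_kⁿ(m_k), U_{k+1}ⁿ) ∈ A_δ^{(n)}) → 1`, then for
every nonempty `S ⊆ [k]`,
`∑_{j∈S} R_j ≥ ∑_{j∈S} H(U_j|U₀) − H(U_S|U₀,U_{k+1}) − 2(|S|+1)δ`. -/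
theorem covering_stmt19
    {k : ℕ} {Ω₀ B : Type*} {A : Fin k → Type*}
    [Fintype Ω₀] [Fintype B] [∀ j, Fintype (A j)]
    [DecidableEq Ω₀] [DecidableEq B] [∀ j, DecidableEq (A j)]
    (p : Ω₀ × (∀ j, A j) × B → ℝ)
    (hp : ∀ z, 0 < p z) (hp1 : ∑ z, p z = 1)
    (δ : ℝ) (hδ : 0 < δ)
    (R : Fin k → ℝ)
    (M : ℕ → Fin k → ℕ)
    (hM : ∀ (n : ℕ) (j : Fin k), (M n j : ℝ) ≤ Real.exp ((n : ℝ) * R j))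
    (μ : ∀ n : ℕ,
      (Fin n → Ω₀) × (∀ j, Fin (M n j) → Fin n → A j) × (Fin n → B) → ℝ)
    (hμ0 : ∀ n ω, 0 ≤ μ n ω) (hμ1 : ∀ n, ∑ ω, μ n ω = 1)
    -- each `m`-indexed tuple is i.i.d. across time with law
    -- `p(u₀)·∏_j p(u_j|u₀)·p(u_{k+1}|u₀)`
    (hlaw : ∀ (n : ℕ) (m : ∀ j, Fin (M n j)) (u : Fin n → Ω₀)
        (x : ∀ j, Fin n → A j) (v : Fin n → B),
      ∑ ω ∈ Finset.univ.filter
          (fun ω : (Fin n → Ω₀) × (∀ j, Fin (M n j) → Fin n → A j) × (Fin n → B) =>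
            ω.1 = u ∧ (∀ j, ω.2.1 j (m j) = x j) ∧ ω.2.2 = v), μ n ω
        = ∏ i, (pr0 p (u i) * (∏ j, pr0j p j (u i) (x j i) / pr0 p (u i)) *
            (pr0B p (u i) (v i) / pr0 p (u i))))
    -- the covering probability tends to one
    (hcov : Filter.Tendsto (fun n : ℕ =>
      ∑ ω ∈ Finset.univ.filter
          (fun ω : (Fin n → Ω₀) × (∀ j, Fin (M n j) → Fin n → A j) × (Fin n → B) =>
            ∃ m : ∀ j, Fin (M n j),
              (fun i => ((ω.1 i, fun j => ω.2.1 j (m j) i, ω.2.2 i) :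
                Ω₀ × (∀ j, A j) × B)) ∈ wTypical p n δ), μ n ω)
      Filter.atTop (nhds 1)) :
    ∀ S : Finset (Fin k), S.Nonempty →
      (∑ j ∈ S, R j) ≥
        (∑ j ∈ S, (wEnt p true {j} false - wEnt p true ∅ false)) -
          (wEnt p true S true - wEnt p true ∅ true) -
          2 * ((S.card : ℝ) + 1) * δ := by
  classical
  intro S hS
  by_contra hcon
  push_neg at hcon
  set τ : ℝ := (∑ j ∈ S, (wEnt p true {j} false - wEnt p true ∅ false)) -
      (wEnt p true S true - wEnt p true ∅ true) - 2 * ((S.card : ℝ) + 1) * δ with hτdef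
  -- the key per-n bound
  have key : ∀ n : ℕ, 0 < n →
      (∑ ω ∈ Finset.univ.filter
          (fun ω : (Fin n → Ω₀) × (∀ j, Fin (M n j) → Fin n → A j) × (Fin n → B) =>
            ∃ m : ∀ j, Fin (M n j),
              (fun i => ((ω.1 i, fun j => ω.2.1 j (m j) i, ω.2.2 i) :
                Ω₀ × (∀ j, A j) × B)) ∈ wTypical p n δ), μ n ω)
        ≤ Real.exp ((n : ℝ) * ((∑ j ∈ S, R j) - τ)) := by
    intro n hn
    by_cases hM0 : ∀ j, 0 < M n j
    · -- MAIN CASE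
      have hn' : (0:ℝ) < n := Nat.cast_pos.mpr hn
      set a : ℝ := (n : ℝ) with hadef
      set c : ℝ := (S.card : ℝ) with hcdef
      let m₀ : ∀ j, Fin (M n j) := fun j => ⟨0, hM0 j⟩
      let wOf : ((Fin n → Ω₀) × (∀ j, Fin n → A j) × (Fin n → B)) →
          (Fin n → Ω₀ × (∀ j, A j) × B) := fun t i => (t.1 i, fun j => t.2.1 j i, t.2.2 i)
      let ρ : (∀ j, Fin (M n j)) →
          ((Fin n → Ω₀) × (∀ j, Fin (M n j) → Fin n → A j) × (Fin n → B)) →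
          ((Fin n → Ω₀) × (∀ j, Fin n → A j) × (Fin n → B)) :=
        fun m ω => (ω.1, fun j => ω.2.1 j (m j), ω.2.2)
      let Ct : Bool → Finset (Fin k) → Bool → (Fin n → Ω₀ × (∀ j, A j) × B) → Prop :=
        fun b0 S' bB w =>
          |(-(1 / (n : ℝ)) * ∑ i, Real.log (wMarg p b0 S' bB (w i))) - wEnt p b0 S' bB| ≤ δ
      let Typ : (Fin n → Ω₀ × (∀ j, A j) × B) → Prop := fun w =>
        Ct true S true w ∧ Ct true ∅ true w ∧ (∀ j ∈ S, Ct true {j} false w) ∧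
          Ct true ∅ false w
      let F : Ω₀ × (∀ j, A j) × B → ℝ := fun z =>
        wMarg p true S true z * ∏ j ∈ Sᶜ, (pr0j p j z.1 (z.2.1 j) / pr0 p z.1)
      have hpr0pos : ∀ z : Ω₀ × (∀ j, A j) × B, 0 < pr0 p z.1 := fun z => by
        have := wMarg_pos p hp true ∅ false z; rwa [wMarg_eq_pr0] at this
      have hpr0jpos : ∀ (j : Fin k) (z : Ω₀ × (∀ j, A j) × B),
          0 < pr0j p j z.1 (z.2.1 j) := fun j z => by
        have := wMarg_pos p hp true {j} false z; rwa [wMarg_eq_pr0j] at this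
      have hpr0Bpos : ∀ z : Ω₀ × (∀ j, A j) × B, 0 < pr0B p z.1 z.2.2 := fun z => by
        have := wMarg_pos p hp true ∅ true z; rwa [wMarg_eq_pr0B] at this
      have hFpos : ∀ z, 0 < F z := fun z => by
        apply mul_pos (wMarg_pos p hp _ _ _ _)
        exact Finset.prod_pos fun j _ => div_pos (hpr0jpos j z) (hpr0pos z)
      let reps : Finset (∀ j, Fin (M n j)) :=
        Fintype.piFinset (fun j => if j ∈ S then Finset.univ else {m₀ j})
      -- Step 1a : union bound over representatives
      have h1a : (∑ ω ∈ Finset.univ.filter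
          (fun ω : (Fin n → Ω₀) × (∀ j, Fin (M n j) → Fin n → A j) × (Fin n → B) =>
            ∃ m : ∀ j, Fin (M n j),
              (fun i => ((ω.1 i, fun j => ω.2.1 j (m j) i, ω.2.2 i) :
                Ω₀ × (∀ j, A j) × B)) ∈ wTypical p n δ), μ n ω)
          ≤ ∑ m ∈ reps, ∑ ω ∈ Finset.univ.filter (fun ω => Typ (wOf (ρ m ω))), μ n ω := by
        have step1 : ∀ ω ∈ Finset.univ.filter
            (fun ω : (Fin n → Ω₀) × (∀ j, Fin (M n j) → Fin n → A j) × (Fin n → B) =>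
              ∃ m : ∀ j, Fin (M n j),
                (fun i => ((ω.1 i, fun j => ω.2.1 j (m j) i, ω.2.2 i) :
                  Ω₀ × (∀ j, A j) × B)) ∈ wTypical p n δ),
            μ n ω ≤ ∑ m ∈ reps, (if Typ (wOf (ρ m ω)) then μ n ω else 0) := by
          intro ω hω
          obtain ⟨m, htyp⟩ := (Finset.mem_filter.mp hω).2
          set m' : ∀ j, Fin (M n j) := fun j => if h : j ∈ S then m j else m₀ j with hm'def
          have hm' : m' ∈ reps := by
            rw [Fintype.mem_piFinset]
            intro j
            by_cases hj : j ∈ S <;> simp [hm'def, hj]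
          have hagree : ∀ (b0 : Bool) (S' : Finset (Fin k)) (bB : Bool), S' ⊆ S →
              ∀ i : Fin n, wMarg p b0 S' bB (wOf (ρ m' ω) i)
                = wMarg p b0 S' bB ((ω.1 i, fun j => ω.2.1 j (m j) i, ω.2.2 i)) := by
            intro b0 S' bB hsub i
            refine wMarg_congr p b0 S' bB (z := wOf (ρ m' ω) i)
              (z' := (ω.1 i, fun j => ω.2.1 j (m j) i, ω.2.2 i)) (fun _ => rfl) ?_ (fun _ => rfl)
            intro j hj
            show ω.2.1 j (m' j) i = ω.2.1 j (m j) i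
            rw [hm'def]
            simp only [dif_pos (hsub hj)]
          have ht := htyp
          rw [wTypical, Set.mem_setOf_eq] at ht
          have hCt : ∀ (b0 : Bool) (S' : Finset (Fin k)) (bB : Bool), S' ⊆ S →
              (b0 = true ∨ S'.Nonempty ∨ bB = true) → Ct b0 S' bB (wOf (ρ m' ω)) := by
            intro b0 S' bB hsub hside
            have h1 := ht b0 S' bB hside
            show |(-(1 / (n : ℝ)) * ∑ i, Real.log (wMarg p b0 S' bB (wOf (ρ m' ω) i))) -
              wEnt p b0 S' bB| ≤ δ
            rw [Finset.sum_congr rfl (fun i _ => congrArg Real.log (hagree b0 S' bB hsub i))]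
            exact h1
          have htyp' : Typ (wOf (ρ m' ω)) :=
            ⟨hCt true S true le_rfl (Or.inl rfl),
             hCt true ∅ true (Finset.empty_subset S) (Or.inl rfl),
             fun j hj => hCt true {j} false (Finset.singleton_subset_iff.mpr hj) (Or.inl rfl),
             hCt true ∅ false (Finset.empty_subset S) (Or.inl rfl)⟩
          calc μ n ω = (if Typ (wOf (ρ m' ω)) then μ n ω else 0) := (if_pos htyp').symm
            _ ≤ ∑ m'' ∈ reps, (if Typ (wOf (ρ m'' ω)) then μ n ω else 0) := by
                refine Finset.single_le_sum
                  (f := fun m'' => if Typ (wOf (ρ m'' ω)) then μ n ω else 0) ?_ hm'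
                intro m'' _
                split
                · exact hμ0 n ω
                · exact le_rfl
        calc (∑ ω ∈ Finset.univ.filter
            (fun ω : (Fin n → Ω₀) × (∀ j, Fin (M n j) → Fin n → A j) × (Fin n → B) =>
              ∃ m : ∀ j, Fin (M n j),
                (fun i => ((ω.1 i, fun j => ω.2.1 j (m j) i, ω.2.2 i) :
                  Ω₀ × (∀ j, A j) × B)) ∈ wTypical p n δ), μ n ω)
            ≤ ∑ ω ∈ Finset.univ.filter
              (fun ω : (Fin n → Ω₀) × (∀ j, Fin (M n j) → Fin n → A j) × (Fin n → B) =>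
                ∃ m : ∀ j, Fin (M n j),
                  (fun i => ((ω.1 i, fun j => ω.2.1 j (m j) i, ω.2.2 i) :
                    Ω₀ × (∀ j, A j) × B)) ∈ wTypical p n δ),
              ∑ m ∈ reps, (if Typ (wOf (ρ m ω)) then μ n ω else 0) := Finset.sum_le_sum step1
          _ = ∑ m ∈ reps, ∑ ω ∈ Finset.univ.filter
              (fun ω : (Fin n → Ω₀) × (∀ j, Fin (M n j) → Fin n → A j) × (Fin n → B) =>
                ∃ m : ∀ j, Fin (M n j),
                  (fun i => ((ω.1 i, fun j => ω.2.1 j (m j) i, ω.2.2 i) :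
                    Ω₀ × (∀ j, A j) × B)) ∈ wTypical p n δ),
              (if Typ (wOf (ρ m ω)) then μ n ω else 0) := Finset.sum_comm
          _ ≤ ∑ m ∈ reps, ∑ ω : (Fin n → Ω₀) × (∀ j, Fin (M n j) → Fin n → A j) × (Fin n → B),
              (if Typ (wOf (ρ m ω)) then μ n ω else 0) := by
              refine Finset.sum_le_sum fun m _ => ?_
              refine Finset.sum_le_sum_of_subset_of_nonneg (Finset.filter_subset _ _) ?_
              intro ω _ _
              split
              · exact hμ0 n ω
              · exact le_rfl
          _ = ∑ m ∈ reps, ∑ ω ∈ Finset.univ.filter (fun ω => Typ (wOf (ρ m ω))), μ n ω := by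
              refine Finset.sum_congr rfl fun m _ => ?_
              rw [Finset.sum_filter]
      -- Step 2 : per-representative probability bound
      have h2 : ∀ m : ∀ j, Fin (M n j),
          (∑ ω ∈ Finset.univ.filter (fun ω => Typ (wOf (ρ m ω))), μ n ω)
            ≤ Real.exp (-(a * τ)) := by
        intro m
        have hmaps : ∀ ω ∈ Finset.univ.filter (fun ω => Typ (wOf (ρ m ω))),
            ρ m ω ∈ Finset.univ.filter (fun t => Typ (wOf t)) := by
          intro ω hω
          rw [Finset.mem_filter] at hω ⊢
          exact ⟨Finset.mem_univ _, hω.2⟩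
        rw [← Finset.sum_fiberwise_of_maps_to hmaps (μ n)]
        have hfib : ∀ t ∈ Finset.univ.filter (fun t => Typ (wOf t)),
            (∑ ω ∈ (Finset.univ.filter
                (fun ω => Typ (wOf (ρ m ω)))).filter (fun ω => ρ m ω = t), μ n ω)
              = ∏ i, (pr0 p (t.1 i) * (∏ j, pr0j p j (t.1 i) (t.2.1 j i) / pr0 p (t.1 i)) *
                  (pr0B p (t.1 i) (t.2.2 i) / pr0 p (t.1 i))) := by
          intro t ht
          rw [← hlaw n m t.1 t.2.1 t.2.2]
          congr 1
          rw [Finset.filter_filter]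
          ext ω
          simp only [Finset.mem_filter, Finset.mem_univ, true_and]
          constructor
          · rintro ⟨-, heq⟩
            exact ⟨congrArg Prod.fst heq,
              fun j => congrFun (congrArg (fun s => s.2.1) heq) j,
              congrArg (fun s => s.2.2) heq⟩
          · rintro ⟨h1, h2, h3⟩
            have heq : ρ m ω = t := Prod.ext h1 (Prod.ext (funext h2) h3)
            refine ⟨?_, heq⟩
            rw [heq]
            exact (Finset.mem_filter.mp ht).2
        rw [Finset.sum_congr rfl hfib]
        -- per-term bound
        have hQF : ∀ t ∈ Finset.univ.filter (fun t => Typ (wOf t)),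
            (∏ i, (pr0 p (t.1 i) * (∏ j, pr0j p j (t.1 i) (t.2.1 j i) / pr0 p (t.1 i)) *
                (pr0B p (t.1 i) (t.2.2 i) / pr0 p (t.1 i))))
              ≤ Real.exp (-(a * τ)) * ∏ i, F (wOf t i) := by
          intro t ht
          obtain ⟨hc1, hc2, hc3, hc4⟩ := (Finset.mem_filter.mp ht).2
          -- single-letter factorization
          have hfac : ∀ i : Fin n,
              (pr0 p (t.1 i) * (∏ j, pr0j p j (t.1 i) (t.2.1 j i) / pr0 p (t.1 i)) *
                (pr0B p (t.1 i) (t.2.2 i) / pr0 p (t.1 i)))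
              = Real.exp ((∑ j ∈ S, Real.log (wMarg p true {j} false (wOf t i))) +
                    Real.log (wMarg p true ∅ true (wOf t i)) -
                    c * Real.log (wMarg p true ∅ false (wOf t i))) *
                  (∏ j ∈ Sᶜ, pr0j p j (wOf t i).1 ((wOf t i).2.1 j) / pr0 p (wOf t i).1) := by
            intro i
            set z : Ω₀ × (∀ j, A j) × B := wOf t i with hzdef
            have hz1 : t.1 i = z.1 := rfl
            have hz2 : ∀ j, t.2.1 j i = z.2.1 j := fun j => rfl
            have hz3 : t.2.2 i = z.2.2 := rfl
            have hexp : Real.exp ((∑ j ∈ S, Real.log (wMarg p true {j} false z)) +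
                Real.log (wMarg p true ∅ true z) - c * Real.log (wMarg p true ∅ false z))
                = (∏ j ∈ S, pr0j p j z.1 (z.2.1 j)) * pr0B p z.1 z.2.2 /
                    (pr0 p z.1) ^ S.card := by
              rw [Real.exp_sub, Real.exp_add, Real.exp_sum, hcdef, Real.exp_nat_mul,
                Real.exp_log, Real.exp_log]
              · congr 1
                congr 1
                · refine Finset.prod_congr rfl fun j _ => ?_
                  rw [Real.exp_log]
                  · rw [wMarg_eq_pr0j]
                  · exact wMarg_pos p hp _ _ _ _
                · rw [wMarg_eq_pr0B]
                · rw [wMarg_eq_pr0]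
              · exact wMarg_pos p hp _ _ _ _
              · exact wMarg_pos p hp _ _ _ _
            calc (pr0 p (t.1 i) * (∏ j, pr0j p j (t.1 i) (t.2.1 j i) / pr0 p (t.1 i)) *
                (pr0B p (t.1 i) (t.2.2 i) / pr0 p (t.1 i)))
                = pr0 p z.1 * (∏ j, pr0j p j z.1 (z.2.1 j) / pr0 p z.1) *
                  (pr0B p z.1 z.2.2 / pr0 p z.1) := rfl
              _ = (pr0 p z.1 * ((∏ j ∈ S, pr0j p j z.1 (z.2.1 j) / pr0 p z.1) *
                    (∏ j ∈ Sᶜ, pr0j p j z.1 (z.2.1 j) / pr0 p z.1)) *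
                    (pr0B p z.1 z.2.2 / pr0 p z.1)) := by
                  rw [Finset.prod_mul_prod_compl S]
              _ = ((∏ j ∈ S, pr0j p j z.1 (z.2.1 j)) * pr0B p z.1 z.2.2 /
                    (pr0 p z.1) ^ S.card) *
                    (∏ j ∈ Sᶜ, pr0j p j z.1 (z.2.1 j) / pr0 p z.1) := by
                  rw [Finset.prod_div_distrib, Finset.prod_const,
                    Finset.prod_div_distrib, Finset.prod_const]
                  have h0 : pr0 p z.1 ≠ 0 := ne_of_gt (hpr0pos z)
                  field_simp
              _ = Real.exp ((∑ j ∈ S, Real.log (wMarg p true {j} false z)) +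
                    Real.log (wMarg p true ∅ true z) - c * Real.log (wMarg p true ∅ false z)) *
                  (∏ j ∈ Sᶜ, pr0j p j z.1 (z.2.1 j) / pr0 p z.1) := by rw [hexp]
          rw [Finset.prod_congr rfl (fun i _ => hfac i), Finset.prod_mul_distrib,
            ← Real.exp_sum]
          -- abbreviations for the log-likelihood sums
          set LSB : ℝ := ∑ i, Real.log (wMarg p true S true (wOf t i)) with hLSB
          set L0B : ℝ := ∑ i, Real.log (wMarg p true ∅ true (wOf t i)) with hL0B
          set L0 : ℝ := ∑ i, Real.log (wMarg p true ∅ false (wOf t i)) with hL0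
          have hEsum : (∑ i, ((∑ j ∈ S, Real.log (wMarg p true {j} false (wOf t i))) +
                Real.log (wMarg p true ∅ true (wOf t i)) -
                c * Real.log (wMarg p true ∅ false (wOf t i))))
              = (∑ j ∈ S, ∑ i, Real.log (wMarg p true {j} false (wOf t i))) + L0B - c * L0 := by
            rw [Finset.sum_sub_distrib, Finset.sum_add_distrib, ← Finset.mul_sum,
              Finset.sum_comm]
          rw [hEsum]
          -- typicality bounds
          have hbS : (∑ j ∈ S, ∑ i, Real.log (wMarg p true {j} false (wOf t i)))
              ≤ a * (c * δ - ∑ j ∈ S, wEnt p true {j} false) := by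
            calc (∑ j ∈ S, ∑ i, Real.log (wMarg p true {j} false (wOf t i)))
                ≤ ∑ j ∈ S, a * (δ - wEnt p true {j} false) :=
                  Finset.sum_le_sum fun j hj => (typ_bound hn' (hc3 j hj)).2
              _ = a * (c * δ - ∑ j ∈ S, wEnt p true {j} false) := by
                  rw [← Finset.mul_sum, Finset.sum_sub_distrib, Finset.sum_const,
                    nsmul_eq_mul, hcdef]
          have hbB : L0B ≤ a * (δ - wEnt p true ∅ true) := (typ_bound hn' hc2).2
          have hb0 : -(a * (wEnt p true ∅ false + δ)) ≤ L0 := (typ_bound hn' hc4).1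
          have hbSB : -(a * (wEnt p true S true + δ)) ≤ LSB := (typ_bound hn' hc1).1
          have hb0' : -(c * L0) ≤ c * (a * (wEnt p true ∅ false + δ)) := by
            have h := neg_le_neg hb0
            rw [neg_neg] at h
            have := mul_le_mul_of_nonneg_left h (by positivity : (0:ℝ) ≤ c)
            linarith [this]
          have hsum2 : (∑ j ∈ S, (wEnt p true {j} false - wEnt p true ∅ false))
              = (∑ j ∈ S, wEnt p true {j} false) - c * wEnt p true ∅ false := by
            rw [Finset.sum_sub_distrib, Finset.sum_const, nsmul_eq_mul, hcdef]
          have haτ : a * τ = a * (∑ j ∈ S, wEnt p true {j} false) -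
              a * c * wEnt p true ∅ false - a * wEnt p true S true +
              a * wEnt p true ∅ true - 2 * (c + 1) * δ * a := by
            rw [hτdef, hsum2]
            ring
          -- combine
          have hineq : (∑ j ∈ S, ∑ i, Real.log (wMarg p true {j} false (wOf t i))) +
              L0B - c * L0 ≤ -(a * τ) + LSB := by
            nlinarith [hbS, hbB, hb0', hbSB, haτ]
          have hprodSB : (∏ i, wMarg p true S true (wOf t i)) = Real.exp LSB := by
            rw [hLSB, Real.exp_sum]
            exact Finset.prod_congr rfl fun i _ =>
              (Real.exp_log (wMarg_pos p hp _ _ _ _)).symm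
          have hFsplit : (∏ i, F (wOf t i)) = Real.exp LSB *
              ∏ i, (∏ j ∈ Sᶜ, pr0j p j (wOf t i).1 ((wOf t i).2.1 j) / pr0 p (wOf t i).1) := by
            rw [← hprodSB, ← Finset.prod_mul_distrib]
          rw [hFsplit, ← mul_assoc, ← Real.exp_add]
          apply mul_le_mul_of_nonneg_right
          · exact Real.exp_le_exp.mpr hineq
          · exact Finset.prod_nonneg fun i _ => Finset.prod_nonneg fun j _ =>
              (div_pos (hpr0jpos j _) (hpr0pos _)).le
        -- sum the per-term bounds
        have hsumF : (∑ t : (Fin n → Ω₀) × (∀ j, Fin n → A j) × (Fin n → B),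
            ∏ i, F (wOf t i)) = (∑ z, F z) ^ n := by
          rw [Fintype.sum_pow F n]
          exact (Fintype.sum_equiv
            (⟨fun w => (fun i => (w i).1, fun j i => (w i).2.1 j, fun i => (w i).2.2),
              wOf, fun w => rfl, fun t => rfl⟩ :
                (Fin n → Ω₀ × (∀ j, A j) × B) ≃
                  ((Fin n → Ω₀) × (∀ j, Fin n → A j) × (Fin n → B)))
            (fun w => ∏ i, F (w i)) (fun t => ∏ i, F (wOf t i)) (fun w => rfl)).symm
        have hF1 : (∑ z, F z) = 1 := singleLetter p hp hp1 S
        calc (∑ t ∈ Finset.univ.filter (fun t => Typ (wOf t)),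
              ∏ i, (pr0 p (t.1 i) * (∏ j, pr0j p j (t.1 i) (t.2.1 j i) / pr0 p (t.1 i)) *
                (pr0B p (t.1 i) (t.2.2 i) / pr0 p (t.1 i))))
            ≤ ∑ t ∈ Finset.univ.filter (fun t => Typ (wOf t)),
              Real.exp (-(a * τ)) * ∏ i, F (wOf t i) := Finset.sum_le_sum hQF
          _ ≤ ∑ t : (Fin n → Ω₀) × (∀ j, Fin n → A j) × (Fin n → B),
              Real.exp (-(a * τ)) * ∏ i, F (wOf t i) := by
              refine Finset.sum_le_sum_of_subset_of_nonneg (Finset.filter_subset _ _) ?_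
              intro t _ _
              exact mul_nonneg (Real.exp_pos _).le
                (Finset.prod_nonneg fun i _ => (hFpos _).le)
          _ = Real.exp (-(a * τ)) * ∑ t : (Fin n → Ω₀) × (∀ j, Fin n → A j) × (Fin n → B),
              ∏ i, F (wOf t i) := by rw [← Finset.mul_sum]
          _ = Real.exp (-(a * τ)) := by rw [hsumF, hF1, one_pow, mul_one]
      -- Step 3 : cardinality of the representative set
      have hcard : ((reps.card : ℝ)) ≤ Real.exp (a * ∑ j ∈ S, R j) := by
        have h1 : reps.card = ∏ j, (if j ∈ S then M n j else 1) := by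
          rw [Fintype.card_piFinset]
          refine Finset.prod_congr rfl fun j _ => ?_
          by_cases hj : j ∈ S <;> simp [hj]
        have h2' : ((reps.card : ℝ)) = ∏ j ∈ S, (M n j : ℝ) := by
          rw [h1]
          push_cast
          rw [← Finset.prod_filter (fun j => j ∈ S) (fun j => ((M n j : ℕ) : ℝ))]
          congr 1
          simp
        rw [h2']
        calc (∏ j ∈ S, (M n j : ℝ)) ≤ ∏ j ∈ S, Real.exp ((n : ℝ) * R j) :=
            Finset.prod_le_prod (fun j _ => Nat.cast_nonneg _) (fun j _ => hM n j)
          _ = Real.exp (∑ j ∈ S, (n : ℝ) * R j) := by rw [Real.exp_sum]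
          _ = Real.exp (a * ∑ j ∈ S, R j) := by rw [← Finset.mul_sum, hadef]
      -- Step 4 : put everything together
      calc (∑ ω ∈ Finset.univ.filter
          (fun ω : (Fin n → Ω₀) × (∀ j, Fin (M n j) → Fin n → A j) × (Fin n → B) =>
            ∃ m : ∀ j, Fin (M n j),
              (fun i => ((ω.1 i, fun j => ω.2.1 j (m j) i, ω.2.2 i) :
                Ω₀ × (∀ j, A j) × B)) ∈ wTypical p n δ), μ n ω)
          ≤ ∑ m ∈ reps, ∑ ω ∈ Finset.univ.filter (fun ω => Typ (wOf (ρ m ω))), μ n ω := h1a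
        _ ≤ ∑ m ∈ reps, Real.exp (-(a * τ)) := Finset.sum_le_sum fun m _ => h2 m
        _ = (reps.card : ℝ) * Real.exp (-(a * τ)) := by
            rw [Finset.sum_const, nsmul_eq_mul]
        _ ≤ Real.exp (a * ∑ j ∈ S, R j) * Real.exp (-(a * τ)) :=
            mul_le_mul_of_nonneg_right hcard (Real.exp_pos _).le
        _ = Real.exp (a * ((∑ j ∈ S, R j) - τ)) := by
            rw [← Real.exp_add]
            ring_nf

    · -- some M n j = 0 : no messages exist at all
      push_neg at hM0
      obtain ⟨j0, hj0⟩ := hM0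
      have hemp : IsEmpty (∀ j, Fin (M n j)) := by
        refine ⟨fun m => ?_⟩
        have := (m j0).2
        omega
      rw [Finset.sum_eq_zero]
      · positivity
      · intro ω hω
        rw [Finset.mem_filter] at hω
        obtain ⟨m, _⟩ := hω.2
        exact (hemp.false m).elim
  -- contradiction with `hcov`
  have hneg : (∑ j ∈ S, R j) - τ < 0 := by linarith
  have hlim0 : Filter.Tendsto (fun n : ℕ => Real.exp ((n : ℝ) * ((∑ j ∈ S, R j) - τ)))
      Filter.atTop (nhds 0) := by
    apply Real.tendsto_exp_atBot.comp
    exact Filter.Tendsto.atTop_mul_const_of_neg hneg tendsto_natCast_atTop_atTop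
  have hPz : Filter.Tendsto (fun n : ℕ =>
      ∑ ω ∈ Finset.univ.filter
          (fun ω : (Fin n → Ω₀) × (∀ j, Fin (M n j) → Fin n → A j) × (Fin n → B) =>
            ∃ m : ∀ j, Fin (M n j),
              (fun i => ((ω.1 i, fun j => ω.2.1 j (m j) i, ω.2.2 i) :
                Ω₀ × (∀ j, A j) × B)) ∈ wTypical p n δ), μ n ω)
      Filter.atTop (nhds 0) := by
    apply squeeze_zero' ?_ ?_ hlim0
    · exact Filter.Eventually.of_forall fun n => Finset.sum_nonneg fun ω _ => hμ0 n ω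
    · filter_upwards [Filter.eventually_gt_atTop 0] with n hn
      exact key n hn
  have := tendsto_nhds_unique hcov hPz
  norm_num at this
end
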